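/- arXiv:2303.05374 — 7 statements merged into one kernel-verified Lean document; each statement's English description precedes it below -/
import Mathlib

section
/- For every p in (0,1), the complete elliptic integral of the second kind satisfies E(p) > sqrt(2 - p^2), where E(p) = ∫₀^{π/2} sqrt(1 - p² sin²θ) dθ. -/
open Real intervalIntegral MeasureTheory

/-- For every `p ∈ (0,1)`, the complete elliptic integral of the second kind
satisfies `E(p) > sqrt (2 - p^2)`. -/
theorem elliptic_second_kind_gt (p : ℝ) (hp : p ∈ Set.Ioo (0:ℝ) 1) :
    (∫ θ in (0:ℝ)..(Real.pi / 2), Real.sqrt (1 - p ^ 2 * Real.sin θ ^ 2))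
      > Real.sqrt (2 - p ^ 2) := by
  obtain ⟨hp0, hp1⟩ := hp
  set k : ℝ := 1 - p ^ 2 with hk
  have hk0 : 0 < k := by nlinarith
  have h2 : (0:ℝ) < 2 - p ^ 2 := by nlinarith
  set c : ℝ := Real.sqrt (2 - p ^ 2) with hc
  have hc0 : 0 < c := Real.sqrt_pos.mpr h2
  have hc2 : c ^ 2 = 2 - p ^ 2 := Real.sq_sqrt h2.le
  set F := fun θ : ℝ => Real.sqrt (1 - p ^ 2 * Real.sin θ ^ 2) with hFdef
  set G := fun θ : ℝ => (Real.cos θ + k * Real.sin θ) / c with hGdef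
  have hF : Continuous F := by
    apply Real.continuous_sqrt.comp
    continuity
  have hG : Continuous G := by
    apply Continuous.div_const
    continuity
  -- pointwise bound
  have key : ∀ θ : ℝ, 0 ≤ Real.cos θ + k * Real.sin θ → G θ ≤ F θ := by
    intro θ h0
    rw [hGdef]
    rw [div_le_iff₀ hc0]
    have : F θ * c = Real.sqrt ((1 - p ^ 2 * Real.sin θ ^ 2) * (2 - p ^ 2)) := by
      rw [hFdef, hc, ← Real.sqrt_mul]
      nlinarith [Real.sin_sq_le_one θ, sq_nonneg p]
    have hnn : 0 ≤ (1 - p ^ 2 * Real.sin θ ^ 2) * (2 - p ^ 2) :=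
      mul_nonneg (by nlinarith [Real.sin_sq_le_one θ, sq_nonneg p]) h2.le
    rw [this, Real.le_sqrt h0]
    swap
    · exact hnn
    have hid : (1 - p ^ 2 * Real.sin θ ^ 2) * (2 - p ^ 2)
        = (Real.cos θ + k * Real.sin θ) ^ 2 + k * (Real.cos θ - Real.sin θ) ^ 2 := by
      rw [hk]
      linear_combination (-(2 - p ^ 2)) * Real.sin_sq_add_cos_sq θ
    nlinarith [mul_nonneg hk0.le (sq_nonneg (Real.cos θ - Real.sin θ))]
  have keystrict : ∀ θ : ℝ, 0 ≤ Real.cos θ + k * Real.sin θ →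
      Real.cos θ ≠ Real.sin θ → G θ < F θ := by
    intro θ h0 hne
    rw [hGdef]
    rw [div_lt_iff₀ hc0]
    have : F θ * c = Real.sqrt ((1 - p ^ 2 * Real.sin θ ^ 2) * (2 - p ^ 2)) := by
      rw [hFdef, hc, ← Real.sqrt_mul]
      nlinarith [Real.sin_sq_le_one θ, sq_nonneg p]
    rw [this, Real.lt_sqrt h0]
    have hne2 : 0 < (Real.cos θ - Real.sin θ) ^ 2 :=
      pow_two_pos_of_ne_zero (sub_ne_zero.mpr hne)
    have hid : (1 - p ^ 2 * Real.sin θ ^ 2) * (2 - p ^ 2)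
        = (Real.cos θ + k * Real.sin θ) ^ 2 + k * (Real.cos θ - Real.sin θ) ^ 2 := by
      rw [hk]
      linear_combination (-(2 - p ^ 2)) * Real.sin_sq_add_cos_sq θ
    nlinarith [mul_pos hk0 hne2]
  -- integrability
  have hFi : ∀ a b : ℝ, IntervalIntegrable F volume a b := fun a b =>
    hF.intervalIntegrable a b
  have hGi : ∀ a b : ℝ, IntervalIntegrable G volume a b := fun a b =>
    hG.intervalIntegrable a b
  have hpi4 : (0:ℝ) < Real.pi / 4 := by positivity
  have hpi42 : Real.pi / 4 < Real.pi / 2 := by linarith [Real.pi_pos]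
  -- strict positivity of F - G on (0, π/4)
  have hpos : ∀ x ∈ Set.Ioo (0:ℝ) (Real.pi / 4), 0 < F x - G x := by
    intro x ⟨hx0, hx4⟩
    have hxpi : x < Real.pi / 2 := lt_trans hx4 hpi42
    have hsin : 0 ≤ Real.sin x := Real.sin_nonneg_of_nonneg_of_le_pi hx0.le
      (by linarith [Real.pi_pos])
    have hcos : 0 < Real.cos x := Real.cos_pos_of_mem_Ioo
      ⟨by linarith [Real.pi_pos], hxpi⟩
    have hlt : Real.sin x < Real.cos x := by
      have h1 : Real.sin x < Real.sin (Real.pi / 4) :=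
        Real.sin_lt_sin_of_lt_of_le_pi_div_two (by linarith [Real.pi_pos])
          (by linarith [Real.pi_pos]) hx4
      have h2 : Real.cos (Real.pi / 4) < Real.cos x :=
        Real.cos_lt_cos_of_nonneg_of_le_pi hx0.le (by linarith [Real.pi_pos]) hx4
      rw [Real.sin_pi_div_four] at h1
      rw [Real.cos_pi_div_four] at h2
      linarith
    have := keystrict x (by positivity) (by intro h; rw [h] at hlt; exact lt_irrefl _ hlt)
    linarith
  have h1 : 0 < ∫ x in (0:ℝ)..(Real.pi / 4), (F x - G x) := by
    apply intervalIntegral.intervalIntegral_pos_of_pos_on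
      ((hFi 0 (Real.pi / 4)).sub (hGi 0 (Real.pi / 4))) hpos hpi4
  have h2' : 0 ≤ ∫ x in (Real.pi / 4)..(Real.pi / 2), (F x - G x) := by
    apply intervalIntegral.integral_nonneg hpi42.le
    intro x ⟨hx1, hx2⟩
    have hsin : 0 ≤ Real.sin x := Real.sin_nonneg_of_nonneg_of_le_pi
      (by linarith [Real.pi_pos]) (by linarith [Real.pi_pos])
    have hcos : 0 ≤ Real.cos x := Real.cos_nonneg_of_mem_Icc
      ⟨by linarith [Real.pi_pos], hx2⟩
    have := key x (by positivity)
    linarith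
  have hsplit : (∫ x in (0:ℝ)..(Real.pi / 2), (F x - G x))
      = (∫ x in (0:ℝ)..(Real.pi / 4), (F x - G x))
        + ∫ x in (Real.pi / 4)..(Real.pi / 2), (F x - G x) := by
    rw [intervalIntegral.integral_add_adjacent_intervals
      ((hFi 0 (Real.pi / 4)).sub (hGi 0 (Real.pi / 4)))
      ((hFi (Real.pi / 4) (Real.pi / 2)).sub (hGi (Real.pi / 4) (Real.pi / 2)))]
  have hdiff : 0 < ∫ x in (0:ℝ)..(Real.pi / 2), (F x - G x) := by
    rw [hsplit]; linarith
  rw [intervalIntegral.integral_sub (hFi 0 (Real.pi / 2)) (hGi 0 (Real.pi / 2))] at hdiff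
  -- compute ∫ G = c
  have hGval : (∫ x in (0:ℝ)..(Real.pi / 2), G x) = c := by
    have : (∫ x in (0:ℝ)..(Real.pi / 2), G x)
        = (∫ x in (0:ℝ)..(Real.pi / 2), (Real.cos x + k * Real.sin x)) / c := by
      rw [intervalIntegral.integral_div]
    rw [this, intervalIntegral.integral_add (g := fun x => k * Real.sin x) (Real.continuous_cos.intervalIntegrable _ _)
      ((continuous_const.mul Real.continuous_sin).intervalIntegrable _ _)]
    rw [intervalIntegral.integral_const_mul, integral_cos, integral_sin]
    simp [Real.sin_pi_div_two, Real.cos_pi_div_two]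
    rw [eq_comm, eq_div_iff hc0.ne']
    nlinarith [hc2]
  rw [hGval] at hdiff
  show Real.sqrt (2 - p ^ 2) < _
  rw [← hc]
  linarith
end

section
/- For 0 < p² < α² < 1, the complete elliptic integral of the third kind satisfies Π(α², p) ≤ (π/2) · sqrt(α² / ((1 - α²)(α² - p²))). -/
open Real MeasureTheory Set Filter intervalIntegral

lemma aux_integrableOn {k : ℝ} (hk : 0 < k) :
    IntegrableOn (fun x : ℝ => 1 / (1 + k * x ^ 2)) (Ioi 0) := by
  have hInt : Integrable (fun x : ℝ => max 1 k⁻¹ * (1 + x ^ 2)⁻¹) :=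
    integrable_inv_one_add_sq.const_mul _
  refine (hInt.mono' ?_ ?_).integrableOn
  · have hc : Continuous fun x : ℝ => 1 / (1 + k * x ^ 2) := by
      apply continuous_const.div (by continuity)
      intro x; positivity
    exact hc.aestronglyMeasurable
  · filter_upwards with x
    have h1 : (0:ℝ) < 1 + k * x ^ 2 := by positivity
    have h2 : (0:ℝ) < 1 + x ^ 2 := by positivity
    rw [Real.norm_of_nonneg (by positivity)]
    have hC2 : k⁻¹ ≤ max 1 k⁻¹ := le_max_right _ _
    have hCk : 1 ≤ max 1 k⁻¹ * k := by
      have hik : k⁻¹ * k = 1 := inv_mul_cancel₀ hk.ne'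
      calc (1:ℝ) = k⁻¹ * k := hik.symm
      _ ≤ max 1 k⁻¹ * k := mul_le_mul_of_nonneg_right hC2 hk.le
    have hC1 : (1:ℝ) ≤ max 1 k⁻¹ := le_max_left _ _
    have hrw : max 1 k⁻¹ * (1 + x ^ 2)⁻¹ = max 1 k⁻¹ / (1 + x ^ 2) := by
      rw [div_eq_mul_inv]
    rw [hrw, div_le_div_iff₀ h1 h2]
    nlinarith [mul_le_mul_of_nonneg_right hCk (sq_nonneg x)]

lemma aux_integral_Ioi {k : ℝ} (hk : 0 < k) :
    ∫ x in Ioi (0:ℝ), 1 / (1 + k * x ^ 2) = π / (2 * Real.sqrt k) := by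
  have hs : 0 < Real.sqrt k := Real.sqrt_pos.2 hk
  have hsq : Real.sqrt k ^ 2 = k := Real.sq_sqrt hk.le
  have hderiv : ∀ x ∈ Ici (0:ℝ),
      HasDerivAt (fun x => Real.arctan (Real.sqrt k * x) / Real.sqrt k)
        (1 / (1 + k * x ^ 2)) x := by
    intro x _
    have h1 : HasDerivAt (fun x : ℝ => Real.sqrt k * x) (Real.sqrt k) x := by
      simpa using (hasDerivAt_id x).const_mul (Real.sqrt k)
    have h2 := (Real.hasDerivAt_arctan (Real.sqrt k * x)).comp x h1
    have h3 := h2.div_const (Real.sqrt k)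
    refine HasDerivAt.congr_deriv h3 ?_
    rw [mul_pow, hsq]
    field_simp
  have htend : Tendsto (fun x => Real.arctan (Real.sqrt k * x) / Real.sqrt k) atTop
      (nhds (π / 2 / Real.sqrt k)) := by
    apply Tendsto.div_const
    apply (Real.tendsto_arctan_atTop.mono_right nhdsWithin_le_nhds).comp
    exact Tendsto.const_mul_atTop hs tendsto_id
  have := integral_Ioi_of_hasDerivAt_of_tendsto'
      (f' := fun x => 1 / (1 + k * x ^ 2)) hderiv (aux_integrableOn hk) htend
  rw [this]
  simp [Real.arctan_zero]
  ring

lemma aux_J {c : ℝ} (hc0 : 0 ≤ c) (hc1 : c < 1) :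
    ∫ θ in (0:ℝ)..(π/2), 1 / (1 - c * Real.sin θ ^ 2) = π / (2 * Real.sqrt (1 - c)) := by
  have hpi : (0:ℝ) ≤ π / 2 := by positivity
  rw [intervalIntegral.integral_of_le hpi, MeasureTheory.integral_Ioc_eq_integral_Ioo]
  have himg : Real.arctan '' Ioi 0 = Ioo 0 (π/2) := by
    ext y
    constructor
    · rintro ⟨x, hx, rfl⟩
      have hpos := Real.arctan_strictMono hx
      rw [Real.arctan_zero] at hpos
      exact ⟨hpos, Real.arctan_lt_pi_div_two x⟩
    · rintro ⟨h1, h2⟩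
      refine ⟨Real.tan y, ?_, Real.arctan_tan (by linarith [Real.pi_pos]) h2⟩
      exact Real.tan_pos_of_pos_of_lt_pi_div_two h1 h2
  rw [← himg, integral_image_eq_integral_abs_deriv_smul measurableSet_Ioi
      (fun x _ => (Real.hasDerivAt_arctan x).hasDerivWithinAt)
      (Real.arctan_injective.injOn)]
  have heq : (fun x : ℝ => |1 / (1 + x ^ 2)| • (1 / (1 - c * Real.sin (Real.arctan x) ^ 2)))
      = fun x : ℝ => 1 / (1 + (1 - c) * x ^ 2) := by
    funext x
    have hx : (0:ℝ) < 1 + x ^ 2 := by positivity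
    have h2 : (0:ℝ) < 1 + (1 - c) * x ^ 2 := by nlinarith [sq_nonneg x]
    rw [abs_of_pos (by positivity), smul_eq_mul, Real.sin_arctan, div_pow, Real.sq_sqrt hx.le]
    have h3 : 1 - c * (x ^ 2 / (1 + x ^ 2)) = (1 + (1 - c) * x ^ 2) / (1 + x ^ 2) := by
      field_simp; ring
    rw [h3]
    field_simp
  rw [heq, aux_integral_Ioi (by linarith)]

lemma aux_CS {f g : ℝ → ℝ} {a b : ℝ} (hab : a ≤ b) (hf : Continuous f) (hg : Continuous g)
    (hB : 0 < ∫ x in a..b, g x ^ 2) :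
    (∫ x in a..b, f x * g x) ^ 2 ≤ (∫ x in a..b, f x ^ 2) * ∫ x in a..b, g x ^ 2 := by
  set A := ∫ x in a..b, f x ^ 2 with hA
  set B := ∫ x in a..b, g x ^ 2 with hBdef
  set C := ∫ x in a..b, f x * g x with hC
  have i1 : IntervalIntegrable (fun x => B ^ 2 * f x ^ 2) volume a b :=
    (continuous_const.mul (hf.pow 2)).intervalIntegrable a b
  have i2 : IntervalIntegrable (fun x => 2 * B * C * (f x * g x)) volume a b :=
    (continuous_const.mul (hf.mul hg)).intervalIntegrable a b
  have i3 : IntervalIntegrable (fun x => C ^ 2 * g x ^ 2) volume a b :=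
    (continuous_const.mul (hg.pow 2)).intervalIntegrable a b
  have key : 0 ≤ ∫ x in a..b, (B * f x - C * g x) ^ 2 :=
    intervalIntegral.integral_nonneg hab fun x _ => sq_nonneg _
  have expand : (∫ x in a..b, (B * f x - C * g x) ^ 2)
      = B ^ 2 * A - 2 * B * C * C + C ^ 2 * B := by
    have hptw : ∀ x : ℝ, (B * f x - C * g x) ^ 2
        = B ^ 2 * f x ^ 2 - 2 * B * C * (f x * g x) + C ^ 2 * g x ^ 2 := fun x => by ring
    simp_rw [hptw]
    rw [intervalIntegral.integral_add (i1.sub i2) i3, intervalIntegral.integral_sub i1 i2,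
      intervalIntegral.integral_const_mul, intervalIntegral.integral_const_mul,
      intervalIntegral.integral_const_mul]
  rw [expand] at key
  nlinarith [key, hB]

/-- For `0 < p² < α² < 1`, the complete elliptic integral of the third kind
satisfies `Π(α², p) ≤ (π/2) * sqrt (α² / ((1-α²)(α²-p²)))`. -/
theorem elliptic_third_kind_le (p α : ℝ) (h0 : 0 < p ^ 2) (h1 : p ^ 2 < α ^ 2)
    (h2 : α ^ 2 < 1) :
    (∫ θ in (0:ℝ)..(Real.pi / 2),
        1 / ((1 - α ^ 2 * Real.sin θ ^ 2) * Real.sqrt (1 - p ^ 2 * Real.sin θ ^ 2)))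
      ≤ (Real.pi / 2) * Real.sqrt (α ^ 2 / ((1 - α ^ 2) * (α ^ 2 - p ^ 2))) := by
  have hp1 : p ^ 2 < 1 := h1.trans h2
  have d1 : ∀ θ : ℝ, 0 < 1 - α ^ 2 * Real.sin θ ^ 2 := by
    intro θ; nlinarith [Real.sin_sq_le_one θ, sq_nonneg (Real.sin θ)]
  have d2 : ∀ θ : ℝ, 0 < 1 - p ^ 2 * Real.sin θ ^ 2 := by
    intro θ; nlinarith [Real.sin_sq_le_one θ, sq_nonneg (Real.sin θ)]
  have hab : 0 < α ^ 2 - p ^ 2 := sub_pos.2 h1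
  have hca : Continuous fun θ : ℝ => 1 - α ^ 2 * Real.sin θ ^ 2 :=
    continuous_const.sub (continuous_const.mul (Real.continuous_sin.pow 2))
  have hcb : Continuous fun θ : ℝ => 1 - p ^ 2 * Real.sin θ ^ 2 :=
    continuous_const.sub (continuous_const.mul (Real.continuous_sin.pow 2))
  set g := fun θ : ℝ => 1 / Real.sqrt ((1 - α ^ 2 * Real.sin θ ^ 2) * (1 - p ^ 2 * Real.sin θ ^ 2)) with hgdef
  set h := fun θ : ℝ => 1 / Real.sqrt (1 - α ^ 2 * Real.sin θ ^ 2) with hhdef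
  have hgc : Continuous g := by
    apply continuous_const.div (Real.continuous_sqrt.comp (hca.mul hcb))
    intro θ; exact (Real.sqrt_pos.2 (mul_pos (d1 θ) (d2 θ))).ne'
  have hhc : Continuous h := by
    apply continuous_const.div (Real.continuous_sqrt.comp hca)
    intro θ; exact (Real.sqrt_pos.2 (d1 θ)).ne'
  have hg2 : ∀ θ : ℝ, g θ ^ 2
      = 1 / ((1 - α ^ 2 * Real.sin θ ^ 2) * (1 - p ^ 2 * Real.sin θ ^ 2)) := by
    intro θ
    rw [hgdef, div_pow, one_pow, Real.sq_sqrt (mul_pos (d1 θ) (d2 θ)).le]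
  have hh2 : ∀ θ : ℝ, h θ ^ 2 = 1 / (1 - α ^ 2 * Real.sin θ ^ 2) := by
    intro θ
    rw [hhdef, div_pow, one_pow, Real.sq_sqrt (d1 θ).le]
  have hgh : ∀ θ : ℝ, 1 / ((1 - α ^ 2 * Real.sin θ ^ 2) * Real.sqrt (1 - p ^ 2 * Real.sin θ ^ 2))
      = g θ * h θ := by
    intro θ
    rw [hgdef, hhdef, div_mul_div_comm, one_mul,
      ← Real.sqrt_mul (mul_pos (d1 θ) (d2 θ)).le]
    congr 1
    rw [show (1 - α ^ 2 * Real.sin θ ^ 2) * (1 - p ^ 2 * Real.sin θ ^ 2)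
          * (1 - α ^ 2 * Real.sin θ ^ 2)
        = (1 - α ^ 2 * Real.sin θ ^ 2) ^ 2 * (1 - p ^ 2 * Real.sin θ ^ 2) from by ring,
      Real.sqrt_mul (sq_nonneg _), Real.sqrt_sq (d1 θ).le]
  have hJa : (∫ θ in (0:ℝ)..(π/2), 1 / (1 - α ^ 2 * Real.sin θ ^ 2))
      = π / (2 * Real.sqrt (1 - α ^ 2)) := aux_J (sq_nonneg α) h2
  have hJb : (∫ θ in (0:ℝ)..(π/2), 1 / (1 - p ^ 2 * Real.sin θ ^ 2))
      = π / (2 * Real.sqrt (1 - p ^ 2)) := aux_J (sq_nonneg p) hp1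
  have hB : (∫ θ in (0:ℝ)..(π/2), h θ ^ 2) = π / (2 * Real.sqrt (1 - α ^ 2)) := by
    simp_rw [hh2]; exact hJa
  have hc1 : Continuous fun θ : ℝ => 1 / (1 - α ^ 2 * Real.sin θ ^ 2) :=
    continuous_const.div hca fun θ => (d1 θ).ne'
  have hc2 : Continuous fun θ : ℝ => 1 / (1 - p ^ 2 * Real.sin θ ^ 2) :=
    continuous_const.div hcb fun θ => (d2 θ).ne'
  have hApt : ∀ θ : ℝ, g θ ^ 2 = (α ^ 2 - p ^ 2)⁻¹
      * (α ^ 2 * (1 / (1 - α ^ 2 * Real.sin θ ^ 2)) - p ^ 2 * (1 / (1 - p ^ 2 * Real.sin θ ^ 2))) := by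
    intro θ
    rw [hg2 θ]
    rw [mul_one_div, mul_one_div, div_sub_div _ _ (d1 θ).ne' (d2 θ).ne',
      show α ^ 2 * (1 - p ^ 2 * Real.sin θ ^ 2) - (1 - α ^ 2 * Real.sin θ ^ 2) * p ^ 2
        = α ^ 2 - p ^ 2 from by ring, ← mul_div_assoc, inv_mul_cancel₀ hab.ne']
  have hA : (∫ θ in (0:ℝ)..(π/2), g θ ^ 2)
      = (α ^ 2 - p ^ 2)⁻¹ * (α ^ 2 * (π / (2 * Real.sqrt (1 - α ^ 2)))
          - p ^ 2 * (π / (2 * Real.sqrt (1 - p ^ 2)))) := by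
    simp_rw [hApt]
    rw [intervalIntegral.integral_const_mul,
      intervalIntegral.integral_sub ((hc1.intervalIntegrable _ _).const_mul (α ^ 2))
        ((hc2.intervalIntegrable _ _).const_mul (p ^ 2)),
      intervalIntegral.integral_const_mul, intervalIntegral.integral_const_mul, hJa, hJb]
  have hsapos : 0 < Real.sqrt (1 - α ^ 2) := Real.sqrt_pos.2 (by linarith)
  have hsbpos : 0 < Real.sqrt (1 - p ^ 2) := Real.sqrt_pos.2 (by linarith)
  have hsa : Real.sqrt (1 - α ^ 2) ^ 2 = 1 - α ^ 2 := Real.sq_sqrt (by linarith)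
  have hBpos : 0 < ∫ θ in (0:ℝ)..(π/2), h θ ^ 2 := by rw [hB]; positivity
  have hCS := aux_CS (a := 0) (b := π/2) (by positivity) hgc hhc hBpos
  have hAle : (∫ θ in (0:ℝ)..(π/2), g θ ^ 2)
      ≤ (α ^ 2 - p ^ 2)⁻¹ * (α ^ 2 * (π / (2 * Real.sqrt (1 - α ^ 2)))) := by
    rw [hA]
    have hnn : 0 ≤ p ^ 2 * (π / (2 * Real.sqrt (1 - p ^ 2))) := by positivity
    have := mul_le_mul_of_nonneg_left (sub_le_self
      (α ^ 2 * (π / (2 * Real.sqrt (1 - α ^ 2)))) hnn) (inv_nonneg.2 hab.le)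
    exact this
  set T := (π / 2) * Real.sqrt (α ^ 2 / ((1 - α ^ 2) * (α ^ 2 - p ^ 2))) with hTdef
  have hTnn : 0 ≤ T := by positivity
  have hT2 : T ^ 2 = (π / 2) ^ 2 * (α ^ 2 / ((1 - α ^ 2) * (α ^ 2 - p ^ 2))) := by
    rw [hTdef, mul_pow, Real.sq_sqrt (div_nonneg (sq_nonneg α) (by nlinarith))]
  have hfin : (α ^ 2 - p ^ 2)⁻¹ * (α ^ 2 * (π / (2 * Real.sqrt (1 - α ^ 2))))
      * (π / (2 * Real.sqrt (1 - α ^ 2)))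
      = (π / 2) ^ 2 * (α ^ 2 / ((1 - α ^ 2) * (α ^ 2 - p ^ 2))) := by
    rw [← hsa]
    field_simp
    rw [Real.sqrt_sq hsapos.le]
  have hsq : (∫ θ in (0:ℝ)..(π/2), g θ * h θ) ^ 2 ≤ T ^ 2 := by
    calc (∫ θ in (0:ℝ)..(π/2), g θ * h θ) ^ 2
        ≤ (∫ θ in (0:ℝ)..(π/2), g θ ^ 2) * ∫ θ in (0:ℝ)..(π/2), h θ ^ 2 := hCS
      _ ≤ ((α ^ 2 - p ^ 2)⁻¹ * (α ^ 2 * (π / (2 * Real.sqrt (1 - α ^ 2)))))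
            * ∫ θ in (0:ℝ)..(π/2), h θ ^ 2 :=
          mul_le_mul_of_nonneg_right hAle hBpos.le
      _ = T ^ 2 := by rw [hB, hT2]; exact hfin
  have hLHS : (∫ θ in (0:ℝ)..(π/2),
      1 / ((1 - α ^ 2 * Real.sin θ ^ 2) * Real.sqrt (1 - p ^ 2 * Real.sin θ ^ 2)))
      = ∫ θ in (0:ℝ)..(π/2), g θ * h θ := by simp_rw [hgh]
  have hCnn : 0 ≤ ∫ θ in (0:ℝ)..(π/2), g θ * h θ := by
    apply intervalIntegral.integral_nonneg (by positivity)
    intro θ _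
    apply mul_nonneg <;> positivity
  rw [hLHS]
  calc (∫ θ in (0:ℝ)..(π/2), g θ * h θ)
      = Real.sqrt ((∫ θ in (0:ℝ)..(π/2), g θ * h θ) ^ 2) := (Real.sqrt_sq hCnn).symm
    _ ≤ Real.sqrt (T ^ 2) := Real.sqrt_le_sqrt hsq
    _ = T := Real.sqrt_sq hTnn
end

section
/- For every p ∈ (0,1), the identity K(p) + (1 - p²)·Π(p²(2 - p²), p) = (2 - p²) · ∫₀^{π/2} sqrt(1 - p² sin²θ) / (1 - p²(2 - p²) sin²θ) dθ holds. -/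
/-- For every `p ∈ (0,1)`,
`K(p) + (1-p²) Π(p²(2-p²), p) = (2-p²) ∫₀^{π/2} sqrt(1-p² sin²θ)/(1-p²(2-p²) sin²θ) dθ`. -/
theorem elliptic_first_third_identity (p : ℝ) (hp : p ∈ Set.Ioo (0:ℝ) 1) :
    (∫ θ in (0:ℝ)..(Real.pi / 2), 1 / Real.sqrt (1 - p ^ 2 * Real.sin θ ^ 2))
      + (1 - p ^ 2) *
        (∫ θ in (0:ℝ)..(Real.pi / 2),
          1 / ((1 - p ^ 2 * (2 - p ^ 2) * Real.sin θ ^ 2) *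
            Real.sqrt (1 - p ^ 2 * Real.sin θ ^ 2)))
      = (2 - p ^ 2) *
        ∫ θ in (0:ℝ)..(Real.pi / 2),
          Real.sqrt (1 - p ^ 2 * Real.sin θ ^ 2) /
            (1 - p ^ 2 * (2 - p ^ 2) * Real.sin θ ^ 2) := by
  obtain ⟨hp0, hp1⟩ := hp
  have hp2 : p ^ 2 < 1 := by nlinarith
  have hD : ∀ θ : ℝ, 0 < 1 - p ^ 2 * Real.sin θ ^ 2 := by
    intro θ
    have hs : Real.sin θ ^ 2 ≤ 1 := Real.sin_sq_le_one θ
    nlinarith [sq_nonneg (Real.sin θ)]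
  have hE : ∀ θ : ℝ, 0 < 1 - p ^ 2 * (2 - p ^ 2) * Real.sin θ ^ 2 := by
    intro θ
    have hs : Real.sin θ ^ 2 ≤ 1 := Real.sin_sq_le_one θ
    nlinarith [mul_le_of_le_one_right (by nlinarith : (0:ℝ) ≤ p ^ 2 * (2 - p ^ 2)) hs,
      sq_nonneg (1 - p ^ 2)]
  have hsq : ∀ θ : ℝ, 0 < Real.sqrt (1 - p ^ 2 * Real.sin θ ^ 2) :=
    fun θ => Real.sqrt_pos.mpr (hD θ)
  -- continuity of the three integrands
  have c1 : Continuous fun θ : ℝ => 1 / Real.sqrt (1 - p ^ 2 * Real.sin θ ^ 2) := by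
    apply Continuous.div continuous_const
    · exact (Real.continuous_sqrt.comp (by continuity))
    · intro θ; exact (hsq θ).ne'
  have c2 : Continuous fun θ : ℝ =>
      1 / ((1 - p ^ 2 * (2 - p ^ 2) * Real.sin θ ^ 2) *
        Real.sqrt (1 - p ^ 2 * Real.sin θ ^ 2)) := by
    apply Continuous.div continuous_const
    · exact ((by continuity : Continuous fun θ : ℝ =>
        1 - p ^ 2 * (2 - p ^ 2) * Real.sin θ ^ 2)).mul
        (Real.continuous_sqrt.comp (by continuity))
    · intro θ; exact (mul_pos (hE θ) (hsq θ)).ne'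
  have c3 : Continuous fun θ : ℝ =>
      Real.sqrt (1 - p ^ 2 * Real.sin θ ^ 2) /
        (1 - p ^ 2 * (2 - p ^ 2) * Real.sin θ ^ 2) := by
    apply Continuous.div
    · exact (Real.continuous_sqrt.comp (by continuity))
    · continuity
    · intro θ; exact (hE θ).ne'
  have i1 : IntervalIntegrable (fun θ : ℝ => 1 / Real.sqrt (1 - p ^ 2 * Real.sin θ ^ 2))
      MeasureTheory.volume (0:ℝ) (Real.pi / 2) := c1.intervalIntegrable _ _
  have i2 : IntervalIntegrable (fun θ : ℝ => (1 - p ^ 2) *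
      (1 / ((1 - p ^ 2 * (2 - p ^ 2) * Real.sin θ ^ 2) *
        Real.sqrt (1 - p ^ 2 * Real.sin θ ^ 2))))
      MeasureTheory.volume (0:ℝ) (Real.pi / 2) :=
    (continuous_const.mul c2).intervalIntegrable _ _
  rw [← intervalIntegral.integral_const_mul, ← intervalIntegral.integral_const_mul,
    ← intervalIntegral.integral_add i1 i2]
  apply intervalIntegral.integral_congr
  intro θ _
  have hDθ := hD θ
  have hEθ := hE θ
  have hsθ := hsq θ
  have hsq2 : Real.sqrt (1 - p ^ 2 * Real.sin θ ^ 2) ^ 2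
      = 1 - p ^ 2 * Real.sin θ ^ 2 := Real.sq_sqrt hDθ.le
  set d := Real.sqrt (1 - p ^ 2 * Real.sin θ ^ 2) with hd
  field_simp
  rw [← hd]
  have hE'' : 1 - p ^ 2 * Real.sin θ ^ 2 * (2 - p ^ 2) ≠ 0 := by intro h; nlinarith
  rw [one_add_div hE'', div_left_inj' hE'']
  linear_combination (-(2 - p ^ 2)) * hsq2
end

section
/- There exists η ∈ (0,1) such that for all p ∈ (0,1), (1/2)·sqrt(1-p²)·sqrt(2-p²) · ∫_{-π/2}^{π/2} sqrt(1 - p² sin²θ)/(1 - p²(2-p²) sin²θ) dθ < (1 + η)·(π/2). -/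
open Real

lemma denom_pos (b : ℝ) (hb : 0 < b) (θ : ℝ) :
    0 < Real.cos θ ^ 2 + b * Real.sin θ ^ 2 := by
  have h := Real.sin_sq_add_cos_sq θ
  rcases le_total b 1 with h1 | h1
  · nlinarith [sq_nonneg (Real.cos θ)]
  · nlinarith [sq_nonneg (Real.sin θ), sq_nonneg (Real.cos θ)]

lemma hasDeriv_F (b : ℝ) (hb : 0 < b) (θ : ℝ) :
    HasDerivAt (fun θ => (θ + Real.arctan ((b-1) * Real.sin θ * Real.cos θ /
        (Real.cos θ ^ 2 + b * Real.sin θ ^ 2))) / b)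
      (1 / (Real.cos θ ^ 2 + b ^ 2 * Real.sin θ ^ 2)) θ := by
  set s := Real.sin θ with hs
  set C := Real.cos θ with hC
  have hh : C ^ 2 + b * s ^ 2 ≠ 0 := ne_of_gt (denom_pos b hb θ)
  have hD2 : (0:ℝ) < C ^ 2 + b ^ 2 * s ^ 2 := denom_pos (b^2) (by positivity) θ
  have hc : C ^ 2 = 1 - s ^ 2 := Real.cos_sq' θ
  have hg : HasDerivAt (fun θ => (b-1) * Real.sin θ * Real.cos θ)
      ((b-1) * (C ^ 2 - s ^ 2)) θ := by
    have := ((Real.hasDerivAt_sin θ).const_mul (b-1)).mul (Real.hasDerivAt_cos θ)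
    refine this.congr_deriv ?_
    ring
  have hd : HasDerivAt (fun θ => Real.cos θ ^ 2 + b * Real.sin θ ^ 2)
      (2 * (b-1) * s * C) θ := by
    have h1 := ((Real.hasDerivAt_cos θ).pow 2).add (((Real.hasDerivAt_sin θ).pow 2).const_mul b)
    refine h1.congr_deriv ?_
    ring
  have hu := hg.div hd hh
  have harc := (Real.hasDerivAt_arctan _).comp θ hu
  have hF := ((hasDerivAt_id θ).add harc).div_const b
  refine hF.congr_deriv ?_
  simp only [Pi.div_apply]
  rw [← hs, ← hC]
  -- algebraic identity
  have hg2 : (C ^ 2 + b * s ^ 2) ^ 2 + ((b-1) * s * C) ^ 2 = C ^ 2 + b ^ 2 * s ^ 2 := by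
    linear_combination (C ^ 2 + b ^ 2 * s ^ 2) * hc
  have hsum : (b-1) * (C ^ 2 - s ^ 2) * (C ^ 2 + b * s ^ 2)
      - (b-1) * s * C * (2 * (b-1) * s * C)
      = b - (C ^ 2 + b ^ 2 * s ^ 2) := by
    linear_combination ((b-1)*(C^2 + 1 - s^2) + 1 - (b-1)^2*s^2) * hc
  have e1 : 1 + ((b-1) * s * C / (C ^ 2 + b * s ^ 2)) ^ 2
      = (C ^ 2 + b ^ 2 * s ^ 2) / (C ^ 2 + b * s ^ 2) ^ 2 := by
    rw [← hg2]; field_simp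
  rw [e1, hsum]
  field_simp
  ring

lemma cont_inv_denom (b : ℝ) (hb : 0 < b) :
    Continuous (fun θ : ℝ => 1 / (Real.cos θ ^ 2 + b * Real.sin θ ^ 2)) := by
  apply Continuous.div continuous_const
  · fun_prop
  · intro θ; exact ne_of_gt (denom_pos b hb θ)

lemma integral_J (b : ℝ) (hb : 0 < b) :
    ∫ θ in (-(Real.pi/2))..(Real.pi/2),
      1 / (Real.cos θ ^ 2 + b ^ 2 * Real.sin θ ^ 2) = Real.pi / b := by
  rw [intervalIntegral.integral_eq_sub_of_hasDerivAt
    (fun θ _ => hasDeriv_F b hb θ)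
    ((cont_inv_denom (b^2) (by positivity)).intervalIntegrable _ _)]
  simp [Real.cos_pi_div_two, Real.sin_pi_div_two]
  field_simp
  ring


theorem aux_bound_for_p (p : ℝ) (hp : p ∈ Set.Ioo (0:ℝ) 1) :
      (1/2) * Real.sqrt (1 - p ^ 2) * Real.sqrt (2 - p ^ 2) *
        (∫ θ in (-(Real.pi/2))..(Real.pi/2),
          Real.sqrt (1 - p ^ 2 * Real.sin θ ^ 2) /
            (1 - p ^ 2 * (2 - p ^ 2) * Real.sin θ ^ 2))
        < (1 + (1/2:ℝ)) * (Real.pi / 2) := by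
  obtain ⟨hp0, hp1⟩ := hp
  set a := 1 - p ^ 2 with ha
  have ha0 : 0 < a := by rw [ha]; nlinarith
  have ha1 : a < 1 := by rw [ha]; nlinarith
  have h2p : (2:ℝ) - p ^ 2 = 1 + a := by rw [ha]; ring
  rw [h2p]
  have hden : ∀ θ : ℝ, 1 - p ^ 2 * (1 + a) * Real.sin θ ^ 2
      = Real.cos θ ^ 2 + a ^ 2 * Real.sin θ ^ 2 := by
    intro θ
    have hc := Real.cos_sq' θ
    rw [ha] at *
    linear_combination (-1) * hc
  have hnum : ∀ θ : ℝ, 1 - p ^ 2 * Real.sin θ ^ 2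
      = Real.cos θ ^ 2 + a * Real.sin θ ^ 2 := by
    intro θ
    have hc := Real.cos_sq' θ
    rw [ha] at *
    linear_combination (-1) * hc
  obtain ⟨c, hc0, hc2⟩ : ∃ c : ℝ, 0 < c ∧ c ^ 2 * (2 * a) = 1 + a :=
    ⟨Real.sqrt ((1 + a) / (2 * a)), Real.sqrt_pos.mpr (by positivity), by
      rw [Real.sq_sqrt (by positivity)]; field_simp⟩
  obtain ⟨A, hAdef⟩ : ∃ x : ℝ, x = c / (2 * (1 + a)) := ⟨_, rfl⟩
  obtain ⟨B, hBdef⟩ : ∃ x : ℝ, x = c * a / (2 * (1 + a)) + 1 / (2 * c) := ⟨_, rfl⟩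
  -- pointwise bound
  have hpt : ∀ θ : ℝ,
      Real.sqrt (1 - p ^ 2 * Real.sin θ ^ 2) / (1 - p ^ 2 * (1 + a) * Real.sin θ ^ 2)
        ≤ A + B * (1 / (Real.cos θ ^ 2 + a ^ 2 * Real.sin θ ^ 2)) := by
    intro θ
    rw [hden θ, hnum θ]
    have hT : 0 < Real.cos θ ^ 2 + a * Real.sin θ ^ 2 := denom_pos a ha0 θ
    have hD : 0 < Real.cos θ ^ 2 + a ^ 2 * Real.sin θ ^ 2 := denom_pos (a^2) (by positivity) θ
    obtain ⟨T, hTdef⟩ : ∃ x : ℝ, x = Real.cos θ ^ 2 + a * Real.sin θ ^ 2 := ⟨_, rfl⟩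
    have hDT : Real.cos θ ^ 2 + a ^ 2 * Real.sin θ ^ 2 = (1 + a) * T - a := by
      rw [hTdef]
      have hcq := Real.cos_sq' θ
      linear_combination (-a) * hcq
    rw [← hTdef] at hT
    rw [← hTdef, hDT]
    rw [hDT] at hD
    have hsq : Real.sqrt T ≤ (c ^ 2 * T + 1) / (2 * c) := by
      rw [le_div_iff₀ (by positivity)]
      nlinarith [sq_nonneg (c * Real.sqrt T - 1), Real.sq_sqrt hT.le, Real.sqrt_nonneg T]
    have hADB : A * ((1 + a) * T - a) + B = (c ^ 2 * T + 1) / (2 * c) := by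
      rw [hAdef, hBdef]
      field_simp
      ring
    have hnum_le : Real.sqrt T ≤ A * ((1 + a) * T - a) + B := by rw [hADB]; exact hsq
    have h1 : Real.sqrt T / ((1 + a) * T - a) ≤ (A * ((1 + a) * T - a) + B) / ((1 + a) * T - a) :=
      div_le_div_of_nonneg_right hnum_le hD.le
    have h2 : (A * ((1 + a) * T - a) + B) / ((1 + a) * T - a)
        = A + B * (1 / ((1 + a) * T - a)) := by
      field_simp
    linarith
  -- integrability and integral computation
  have hgcont : Continuous (fun θ : ℝ => A + B * (1 / (Real.cos θ ^ 2 + a ^ 2 * Real.sin θ ^ 2))) := by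
    apply continuous_const.add
    apply Continuous.mul continuous_const
    apply Continuous.div continuous_const (by fun_prop)
    intro θ; exact ne_of_gt (denom_pos (a^2) (by positivity) θ)
  have hfcont : Continuous (fun θ : ℝ =>
      Real.sqrt (1 - p ^ 2 * Real.sin θ ^ 2) / (1 - p ^ 2 * (1 + a) * Real.sin θ ^ 2)) := by
    apply Continuous.div
    · exact Real.continuous_sqrt.comp (by fun_prop)
    · fun_prop
    · intro θ; rw [hden θ]; exact ne_of_gt (denom_pos (a^2) (by positivity) θ)
  have hmono : (∫ θ in (-(Real.pi/2))..(Real.pi/2),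
        Real.sqrt (1 - p ^ 2 * Real.sin θ ^ 2) / (1 - p ^ 2 * (1 + a) * Real.sin θ ^ 2))
      ≤ ∫ θ in (-(Real.pi/2))..(Real.pi/2),
        (A + B * (1 / (Real.cos θ ^ 2 + a ^ 2 * Real.sin θ ^ 2))) := by
    apply intervalIntegral.integral_mono_on (by linarith [Real.pi_pos])
      (hfcont.intervalIntegrable _ _) (hgcont.intervalIntegrable _ _)
    exact fun θ _ => hpt θ
  have hJ : ∫ θ in (-(Real.pi/2))..(Real.pi/2),
      1 / (Real.cos θ ^ 2 + a ^ 2 * Real.sin θ ^ 2) = Real.pi / a := integral_J a ha0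
  have hgval : (∫ θ in (-(Real.pi/2))..(Real.pi/2),
      (A + B * (1 / (Real.cos θ ^ 2 + a ^ 2 * Real.sin θ ^ 2))))
      = A * Real.pi + B * (Real.pi / a) := by
    rw [intervalIntegral.integral_add (f := fun _ => A) (g := fun θ => B * (1 / (Real.cos θ ^ 2 + a ^ 2 * Real.sin θ ^ 2))) (intervalIntegrable_const)
      ((continuous_const.mul (cont_inv_denom (a^2) (by positivity))).intervalIntegrable _ _),
      intervalIntegral.integral_const_mul, hJ, intervalIntegral.integral_const]
    simp only [smul_eq_mul]
    ring
  -- final numeric bound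
  have hy2 : (Real.sqrt a * Real.sqrt (1+a) * c) ^ 2 = (1 + a) ^ 2 / 2 := by
    have hsa : Real.sqrt a ^ 2 = a := Real.sq_sqrt ha0.le
    have hsw : Real.sqrt (1+a) ^ 2 = 1 + a := Real.sq_sqrt (by linarith)
    linear_combination (c^2 * Real.sqrt (1+a)^2) * hsa + (a * c^2) * hsw + ((1+a)/2) * hc2
  have hy0 : 0 < Real.sqrt a * Real.sqrt (1+a) * c :=
    mul_pos (mul_pos (Real.sqrt_pos.mpr ha0) (Real.sqrt_pos.mpr (by linarith))) hc0
  have hylt : Real.sqrt a * Real.sqrt (1+a) * c < 3/4 * (1+a) := by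
    nlinarith [hy2, hy0, ha0]
  have hM : A * Real.pi + B * (Real.pi / a) = 2 * c * Real.pi / (1+a) := by
    rw [hAdef, hBdef]
    field_simp
    linear_combination (-1) * hc2
  calc 1/2 * Real.sqrt a * Real.sqrt (1+a) * ∫ θ in (-(Real.pi/2))..(Real.pi/2),
        Real.sqrt (1 - p ^ 2 * Real.sin θ ^ 2) / (1 - p ^ 2 * (1 + a) * Real.sin θ ^ 2)
      ≤ 1/2 * Real.sqrt a * Real.sqrt (1+a) * (A * Real.pi + B * (Real.pi / a)) := by
        apply mul_le_mul_of_nonneg_left (hmono.trans_eq hgval)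
        positivity
    _ = (Real.sqrt a * Real.sqrt (1+a) * c) * Real.pi / (1+a) := by rw [hM]; ring
    _ < (1 + 1/2) * (Real.pi / 2) := by
        rw [div_lt_iff₀ (by linarith : (0:ℝ) < 1+a)]
        nlinarith [mul_lt_mul_of_pos_right hylt Real.pi_pos]


/-- There exists `η ∈ (0,1)` such that for all `p ∈ (0,1)`,
`(1/2) sqrt(1-p²) sqrt(2-p²) ∫_{-π/2}^{π/2} sqrt(1-p² sin²θ)/(1-p²(2-p²) sin²θ) dθ
  < (1+η) (π/2)`. -/
theorem uniform_bound_closing_integral :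
    ∃ η ∈ Set.Ioo (0:ℝ) 1, ∀ p ∈ Set.Ioo (0:ℝ) 1,
      (1/2) * Real.sqrt (1 - p ^ 2) * Real.sqrt (2 - p ^ 2) *
        (∫ θ in (-(Real.pi/2))..(Real.pi/2),
          Real.sqrt (1 - p ^ 2 * Real.sin θ ^ 2) /
            (1 - p ^ 2 * (2 - p ^ 2) * Real.sin θ ^ 2))
        < (1 + η) * (Real.pi / 2) := by
  exact ⟨1/2, by norm_num, fun p hp => aux_bound_for_p p hp⟩
end

section
/- For a > 0, let u_ε : [-a,a] → ℍ², u_ε(x) = (x, ε·cosh(x/ε)) be the catenary curves. Then the hyperbolic elastic energy satisfies E(u_ε) = 4·(e^{2a/ε} − 1)/(e^{2a/ε} + 1) + 4·tanh(a/ε), and consequently E(u_ε) → 8 as ε → 0⁺. -/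
noncomputable def hNorm (p v : ℝ × ℝ) : ℝ := Real.sqrt (v.1 ^ 2 + v.2 ^ 2) / p.2

noncomputable def hCov (u X : ℝ → ℝ × ℝ) (x : ℝ) : ℝ × ℝ :=
  (deriv (fun t => (X t).1) x
      - ((X x).1 * deriv (fun t => (u t).2) x + (X x).2 * deriv (fun t => (u t).1) x) / (u x).2,
   deriv (fun t => (X t).2) x
      + ((X x).1 * deriv (fun t => (u t).1) x - (X x).2 * deriv (fun t => (u t).2) x) / (u x).2)

noncomputable def hTangent (u : ℝ → ℝ × ℝ) (x : ℝ) : ℝ × ℝ :=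
  (hNorm (u x) (deriv u x))⁻¹ • deriv u x

noncomputable def hCurv (u : ℝ → ℝ × ℝ) (x : ℝ) : ℝ × ℝ :=
  (hNorm (u x) (deriv u x))⁻¹ • hCov u (hTangent u) x

noncomputable def hElastic (u : ℝ → ℝ × ℝ) (a b : ℝ) : ℝ :=
  ∫ x in a..b, (hNorm (u x) (hCurv u x)) ^ 2 * hNorm (u x) (deriv u x)

variable {ε : ℝ}

lemma hd2 (hε : 0 < ε) (x : ℝ) :
    HasDerivAt (fun t : ℝ => ε * Real.cosh (t / ε)) (Real.sinh (x / ε)) x := by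
  have h := ((Real.hasDerivAt_cosh (x / ε)).comp x
    ((hasDerivAt_id x).div_const ε)).const_mul ε
  have e : ε * (Real.sinh (x / ε) * ε⁻¹) = Real.sinh (x / ε) := by
    field_simp
  rw [← e]
  simpa using h

lemma hdu (hε : 0 < ε) (x : ℝ) :
    HasDerivAt (fun x : ℝ => (x, ε * Real.cosh (x / ε))) ((1 : ℝ), Real.sinh (x / ε)) x :=
  (hasDerivAt_id x).prodMk (hd2 hε x)

lemma deriv_u (hε : 0 < ε) (x : ℝ) :
    deriv (fun x : ℝ => (x, ε * Real.cosh (x / ε))) x = (1, Real.sinh (x / ε)) :=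
  (hdu hε x).deriv

lemma sqrt_one_add (x : ℝ) : Real.sqrt (1 ^ 2 + Real.sinh x ^ 2) = Real.cosh x := by
  rw [show (1:ℝ) ^ 2 + Real.sinh x ^ 2 = Real.cosh x ^ 2 by rw [Real.cosh_sq]; ring]
  exact Real.sqrt_sq (Real.cosh_pos x).le

lemma speed (hε : 0 < ε) (x : ℝ) :
    hNorm ((fun x : ℝ => (x, ε * Real.cosh (x / ε))) x)
      (deriv (fun x : ℝ => (x, ε * Real.cosh (x / ε))) x) = 1 / ε := by
  rw [deriv_u hε]
  simp only [hNorm, sqrt_one_add]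
  rw [div_eq_div_iff (by positivity) hε.ne']
  ring

lemma tangent_eq (hε : 0 < ε) :
    hTangent (fun x : ℝ => (x, ε * Real.cosh (x / ε)))
      = fun x : ℝ => (ε, ε * Real.sinh (x / ε)) := by
  funext x
  rw [hTangent, speed hε, deriv_u hε]
  simp [Prod.smul_mk, one_div, inv_inv, smul_eq_mul]

lemma hd2' (hε : 0 < ε) (x : ℝ) :
    HasDerivAt (fun t : ℝ => ε * Real.sinh (t / ε)) (Real.cosh (x / ε)) x := by
  have h := ((Real.hasDerivAt_sinh (x / ε)).comp x
    ((hasDerivAt_id x).div_const ε)).const_mul ε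
  have e : ε * (Real.cosh (x / ε) * ε⁻¹) = Real.cosh (x / ε) := by
    field_simp
  rw [← e]
  simpa using h

lemma cov_eq (hε : 0 < ε) (x : ℝ) :
    hCov (fun x : ℝ => (x, ε * Real.cosh (x / ε)))
        (hTangent (fun x : ℝ => (x, ε * Real.cosh (x / ε)))) x
      = (-(2 * Real.sinh (x / ε) / Real.cosh (x / ε)), 2 / Real.cosh (x / ε)) := by
  have hc := (Real.cosh_pos (x / ε)).ne'
  rw [hCov, tangent_eq hε]
  simp only [deriv_const', (hd2 hε x).deriv, (hd2' hε x).deriv]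
  have h1 : deriv (fun t : ℝ => ((fun x : ℝ => (x, ε * Real.cosh (x / ε))) t).1) x = 1 := by
    simp
  have h2 : deriv (fun t : ℝ => ((fun x : ℝ => (x, ε * Real.cosh (x / ε))) t).2) x
      = Real.sinh (x / ε) := by
    simpa using (hd2 hε x).deriv
  have hs : Real.cosh (x / ε) ^ 2 = Real.sinh (x / ε) ^ 2 + 1 := Real.cosh_sq _
  refine Prod.ext ?_ ?_ <;> simp only [deriv_id''] <;> field_simp
  · ring
  · linear_combination hs

lemma curv_norm (hε : 0 < ε) (x : ℝ) :
    hNorm ((fun x : ℝ => (x, ε * Real.cosh (x / ε))) x)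
      (hCurv (fun x : ℝ => (x, ε * Real.cosh (x / ε))) x) = 2 / Real.cosh (x / ε) := by
  have hc := Real.cosh_pos (x / ε)
  have hs : Real.cosh (x / ε) ^ 2 = Real.sinh (x / ε) ^ 2 + 1 := Real.cosh_sq _
  rw [hCurv, speed hε, cov_eq hε]
  simp only [hNorm, one_div, inv_inv, Prod.smul_mk, smul_eq_mul]
  rw [show (ε * -(2 * Real.sinh (x / ε) / Real.cosh (x / ε))) ^ 2
      + (ε * (2 / Real.cosh (x / ε))) ^ 2 = (2 * ε) ^ 2 by
    field_simp; nlinarith [hs]]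
  rw [Real.sqrt_sq (by positivity)]
  field_simp

lemma integrand_eq (hε : 0 < ε) (x : ℝ) :
    (hNorm ((fun x : ℝ => (x, ε * Real.cosh (x / ε))) x)
        (hCurv (fun x : ℝ => (x, ε * Real.cosh (x / ε))) x)) ^ 2
      * hNorm ((fun x : ℝ => (x, ε * Real.cosh (x / ε))) x)
        (deriv (fun x : ℝ => (x, ε * Real.cosh (x / ε))) x)
      = 4 / (ε * Real.cosh (x / ε) ^ 2) := by
  rw [curv_norm hε, speed hε]
  have hc := (Real.cosh_pos (x / ε)).ne'
  field_simp
  ring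

lemma hasDerivAt_tanh (y : ℝ) :
    HasDerivAt Real.tanh (1 / Real.cosh y ^ 2) y := by
  have hc := (Real.cosh_pos y).ne'
  have h := (Real.hasDerivAt_sinh y).div (Real.hasDerivAt_cosh y) hc
  have e : (Real.cosh y * Real.cosh y - Real.sinh y * Real.sinh y) / Real.cosh y ^ 2
      = 1 / Real.cosh y ^ 2 := by
    rw [show Real.cosh y * Real.cosh y - Real.sinh y * Real.sinh y = 1 by
      nlinarith [Real.cosh_sq y]]
  rw [← e]
  have : (fun x => Real.sinh x / Real.cosh x) = Real.tanh := by
    funext t; rw [Real.tanh_eq_sinh_div_cosh]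
  rw [← this]; exact h

lemma hasDerivAt_F (hε : 0 < ε) (x : ℝ) :
    HasDerivAt (fun y : ℝ => 4 * Real.tanh (y / ε)) (4 / (ε * Real.cosh (x / ε) ^ 2)) x := by
  have h := ((hasDerivAt_tanh (x / ε)).comp x ((hasDerivAt_id x).div_const ε)).const_mul 4
  have e : 4 * (1 / Real.cosh (x / ε) ^ 2 * (1 / ε)) = 4 / (ε * Real.cosh (x / ε) ^ 2) := by
    have hc := (Real.cosh_pos (x / ε)).ne'
    field_simp
  rw [← e]
  simpa using h

lemma tanh_two (t : ℝ) :
    Real.tanh t = (Real.exp (2 * t) - 1) / (Real.exp (2 * t) + 1) := by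
  rw [Real.tanh_eq_sinh_div_cosh, Real.sinh_eq, Real.cosh_eq,
    two_mul, Real.exp_add]
  have h1 := (Real.exp_pos t).ne'
  have h2 := (Real.exp_pos (-t)).ne'
  rw [Real.exp_neg t, div_div_div_eq, div_eq_div_iff (by positivity) (by positivity)]
  field_simp

lemma tanh_atTop : Filter.Tendsto Real.tanh Filter.atTop (nhds 1) := by
  have h2 : Filter.Tendsto (fun t : ℝ => Real.exp (2 * t) + 1) Filter.atTop Filter.atTop := by
    apply Filter.tendsto_atTop_add_const_right
    exact Real.tendsto_exp_atTop.comp (Filter.tendsto_id.const_mul_atTop two_pos)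
  have h0 : Filter.Tendsto (fun t : ℝ => 2 / (Real.exp (2 * t) + 1)) Filter.atTop (nhds 0) :=
    Filter.Tendsto.div_atTop tendsto_const_nhds h2
  have := (tendsto_const_nhds (x := (1:ℝ)) (f := Filter.atTop)).sub h0
  rw [sub_zero] at this
  refine this.congr fun t => ?_
  rw [tanh_two]
  have : Real.exp (2 * t) + 1 ≠ 0 := by positivity
  field_simp
  ring

lemma elastic_eq (hε : 0 < ε) (a : ℝ) :
    hElastic (fun x => (x, ε * Real.cosh (x / ε))) (-a) a = 8 * Real.tanh (a / ε) := by
  rw [hElastic]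
  have hint : IntervalIntegrable (fun x : ℝ => 4 / (ε * Real.cosh (x / ε) ^ 2))
      MeasureTheory.volume (-a) a := by
    apply Continuous.intervalIntegrable
    exact continuous_const.div (by continuity) (fun x => by positivity)
  calc (∫ x in (-a)..a,
        (hNorm ((fun x : ℝ => (x, ε * Real.cosh (x / ε))) x)
          (hCurv (fun x : ℝ => (x, ε * Real.cosh (x / ε))) x)) ^ 2
        * hNorm ((fun x : ℝ => (x, ε * Real.cosh (x / ε))) x)
          (deriv (fun x : ℝ => (x, ε * Real.cosh (x / ε))) x))
      = ∫ x in (-a)..a, 4 / (ε * Real.cosh (x / ε) ^ 2) := by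
        congr 1; funext x; exact integrand_eq hε x
    _ = 4 * Real.tanh (a / ε) - 4 * Real.tanh (-a / ε) :=
        intervalIntegral.integral_eq_sub_of_hasDerivAt (fun x _ => hasDerivAt_F hε x) hint
    _ = 8 * Real.tanh (a / ε) := by rw [neg_div, Real.tanh_neg]; ring

/-- For the catenary curves `u_ε(x) = (x, ε cosh(x/ε))` on `[-a,a]`,
the elastic energy equals `4 (e^{2a/ε}-1)/(e^{2a/ε}+1) + 4 tanh(a/ε)` and tends to `8`
as `ε → 0⁺`. -/
theorem catenary_elastic_energy (a : ℝ) (ha : 0 < a) :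
    (∀ ε : ℝ, 0 < ε →
      hElastic (fun x => (x, ε * Real.cosh (x / ε))) (-a) a
        = 4 * (Real.exp (2 * a / ε) - 1) / (Real.exp (2 * a / ε) + 1)
          + 4 * Real.tanh (a / ε)) ∧
    Filter.Tendsto (fun ε : ℝ => hElastic (fun x => (x, ε * Real.cosh (x / ε))) (-a) a)
      (nhdsWithin 0 (Set.Ioi 0)) (nhds 8) := by
  constructor
  · intro ε hε
    rw [elastic_eq hε a, show 2 * a / ε = 2 * (a / ε) by ring]
    rw [mul_div_assoc, ← tanh_two]
    ring
  · have hto : Filter.Tendsto (fun ε : ℝ => a / ε) (nhdsWithin 0 (Set.Ioi 0)) Filter.atTop := by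
      simpa [div_eq_mul_inv] using Filter.Tendsto.const_mul_atTop ha tendsto_inv_nhdsGT_zero
    have h := ((tanh_atTop.comp hto).const_mul (8:ℝ))
    rw [mul_one] at h
    refine h.congr' ?_
    filter_upwards [self_mem_nhdsWithin] with ε hε
    exact (elastic_eq hε a).symm
end

section
/- Let γ : [α,β] → ℍ² be the canonical parametrization of an orbit-like free elastica with parameter p ∈ (0,1), i.e., with scalar curvature κ(s)² = κ₀²·dn²(rs, p) where κ₀² = 4/(2−p²) and r = 1/sqrt(2−p²). If am(rβ, p) − am(rα, p) > mπ for some m ∈ ℕ, then the elastic energy satisfies E(γ) = ∫_α^β κ(s)² ds > 8m. -/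
open intervalIntegral Real Set Filter MeasureTheory


/-- The Jacobi amplitude function `am(·,p)`, inverse of the incomplete elliptic
integral of the first kind `φ ↦ ∫₀^φ (1 - p² sin²θ)^{-1/2} dθ`. -/
noncomputable def am (p x : ℝ) : ℝ :=
  Function.invFun (fun φ => ∫ θ in (0:ℝ)..φ, 1 / Real.sqrt (1 - p ^ 2 * Real.sin θ ^ 2)) x

/-- The Jacobi elliptic function `sn`. -/
noncomputable def sn (p x : ℝ) : ℝ := Real.sin (am p x)

/-- The Jacobi elliptic function `dn`. -/
noncomputable def dn (p x : ℝ) : ℝ := Real.sqrt (1 - p ^ 2 * sn p x ^ 2)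

noncomputable def gg (p θ : ℝ) : ℝ := Real.sqrt (1 - p ^ 2 * Real.sin θ ^ 2)
noncomputable def FF (p : ℝ) : ℝ → ℝ :=
  fun φ => ∫ θ in (0:ℝ)..φ, 1 / Real.sqrt (1 - p ^ 2 * Real.sin θ ^ 2)

section
variable {p : ℝ}

lemma base_pos (hp0 : 0 < p) (hp1 : p < 1) (θ : ℝ) : 0 < 1 - p ^ 2 * Real.sin θ ^ 2 := by
  nlinarith [Real.sin_sq_le_one θ, sq_nonneg (Real.sin θ)]
lemma gg_pos (hp0 : 0 < p) (hp1 : p < 1) (θ : ℝ) : 0 < gg p θ := Real.sqrt_pos.mpr (base_pos hp0 hp1 θ)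
lemma gg_sq (hp0 : 0 < p) (hp1 : p < 1) (θ : ℝ) : gg p θ ^ 2 = 1 - p ^ 2 * Real.sin θ ^ 2 :=
  Real.sq_sqrt (base_pos hp0 hp1 θ).le
lemma gg_le_one (θ : ℝ) : gg p θ ≤ 1 :=
  Real.sqrt_le_one.mpr (by nlinarith [sq_nonneg (p * Real.sin θ)])
lemma gg_cont : Continuous (gg p) := by unfold gg; fun_prop
lemma inv_gg_cont (hp0 : 0 < p) (hp1 : p < 1) : Continuous (fun θ => 1 / gg p θ) :=
  continuous_const.div (gg_cont) (fun θ => (gg_pos hp0 hp1 θ).ne')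
lemma one_le_inv_gg (hp0 : 0 < p) (hp1 : p < 1) (θ : ℝ) : 1 ≤ 1 / gg p θ :=
  (le_div_iff₀ (gg_pos hp0 hp1 θ)).mpr (by simpa using gg_le_one θ)
lemma FF_hasDeriv (hp0 : 0 < p) (hp1 : p < 1) (φ : ℝ) : HasDerivAt (FF p) (1 / gg p φ) φ := by
  have hc : Continuous (fun θ => 1 / Real.sqrt (1 - p ^ 2 * Real.sin θ ^ 2)) := inv_gg_cont hp0 hp1
  exact intervalIntegral.integral_hasDerivAt_right (hc.intervalIntegrable _ _)
    (hc.stronglyMeasurableAtFilter _ _) hc.continuousAt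

variable (hp0 : 0 < p) (hp1 : p < 1)
include hp0 hp1

lemma FF_strictMono : StrictMono (FF p) := by
  apply strictMono_of_deriv_pos
  intro x
  rw [(FF_hasDeriv hp0 hp1 x).deriv]
  exact div_pos one_pos (gg_pos hp0 hp1 x)
lemma FF_cont : Continuous (FF p) := by
  have : Differentiable ℝ (FF p) := fun x => (FF_hasDeriv hp0 hp1 x).differentiableAt
  exact this.continuous

lemma FF_ge_id (φ : ℝ) (hφ : 0 ≤ φ) : φ ≤ FF p φ := by
  calc φ = ∫ θ in (0:ℝ)..φ, (1:ℝ) := by simp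
  _ ≤ FF p φ := by
      apply intervalIntegral.integral_mono_on hφ (intervalIntegrable_const)
        ((inv_gg_cont hp0 hp1).intervalIntegrable _ _)
      intro x _; exact one_le_inv_gg hp0 hp1 x

lemma FF_le_id (φ : ℝ) (hφ : φ ≤ 0) : FF p φ ≤ φ := by
  have : -FF p φ = ∫ θ in φ..(0:ℝ), 1 / Real.sqrt (1 - p ^ 2 * Real.sin θ ^ 2) := by
    rw [show FF p φ = ∫ θ in (0:ℝ)..φ, 1 / Real.sqrt (1 - p ^ 2 * Real.sin θ ^ 2) from rfl,
      intervalIntegral.integral_symm, neg_neg]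
  have h2 : (0:ℝ) - φ ≤ ∫ θ in φ..(0:ℝ), 1 / Real.sqrt (1 - p ^ 2 * Real.sin θ ^ 2) := by
    calc (0:ℝ) - φ = ∫ θ in φ..(0:ℝ), (1:ℝ) := by simp
    _ ≤ _ := by
      apply intervalIntegral.integral_mono_on (by linarith) intervalIntegrable_const
        ((inv_gg_cont hp0 hp1).intervalIntegrable _ _)
      intro x _; exact one_le_inv_gg hp0 hp1 x
  linarith [this ▸ h2]

lemma FF_surj : Function.Surjective (FF p) := by
  apply Continuous.surjective (FF_cont hp0 hp1)
  · apply tendsto_atTop_mono' _ _ tendsto_id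
    filter_upwards [eventually_ge_atTop (0:ℝ)] with x hx
    exact FF_ge_id hp0 hp1 x hx
  · apply tendsto_atBot_mono' _ _ tendsto_id
    filter_upwards [eventually_le_atBot (0:ℝ)] with x hx
    exact FF_le_id hp0 hp1 x hx

lemma am_FF (θ : ℝ) : am p (FF p θ) = θ :=
  Function.leftInverse_invFun (FF_strictMono hp0 hp1).injective θ

lemma FF_am (x : ℝ) : FF p (am p x) = x :=
  Function.rightInverse_invFun (FF_surj hp0 hp1) x

lemma am_cont : Continuous (am p) := by
  have h1 := FF_strictMono hp0 hp1
  have h2 := FF_surj hp0 hp1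
  have : am p = fun x => (StrictMono.orderIsoOfSurjective (FF p) h1 h2).symm x := by
    funext x
    apply h1.injective
    rw [FF_am hp0 hp1]
    conv_lhs => rw [← (StrictMono.orderIsoOfSurjective (FF p) h1 h2).apply_symm_apply x]
    rw [show ⇑(StrictMono.orderIsoOfSurjective (FF p) h1 h2) = FF p from
      StrictMono.coe_orderIsoOfSurjective (FF p) h1 h2]
  rw [this]
  exact OrderIso.continuous (StrictMono.orderIsoOfSurjective (FF p) h1 h2).symm

omit hp0 hp1 in
lemma dn_eq (x : ℝ) : dn p x = gg p (am p x) := rfl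

lemma dn_int (a b : ℝ) :
    (∫ u in a..b, dn p u ^ 2) = ∫ θ in (am p a)..(am p b), gg p θ := by
  have key := intervalIntegral.integral_comp_smul_deriv
    (f := FF p) (f' := fun θ => 1 / gg p θ) (g := fun u => dn p u ^ 2)
    (a := am p a) (b := am p b)
    (fun x _ => FF_hasDeriv hp0 hp1 x)
    ((inv_gg_cont hp0 hp1).continuousOn)
    (((gg_cont.comp (am_cont hp0 hp1)).pow 2))
  rw [FF_am hp0 hp1, FF_am hp0 hp1] at key
  rw [← key]
  apply intervalIntegral.integral_congr
  intro θ _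
  simp only [Function.comp, smul_eq_mul]
  rw [dn_eq, am_FF hp0 hp1]
  field_simp [pow_two]

omit hp0 hp1 in
lemma gg_nonneg (θ : ℝ) : 0 ≤ gg p θ := Real.sqrt_nonneg _

omit hp0 hp1 in
lemma gg_periodic : Function.Periodic (gg p) Real.pi := by
  intro θ
  simp [gg, Real.sin_add_pi]

omit hp0 hp1 in
lemma int_gg_ge (A B : ℝ) (m : ℕ) (hAB : A + m * Real.pi ≤ B) :
    (m : ℝ) * ∫ θ in (0:ℝ)..Real.pi, gg p θ ≤ ∫ θ in A..B, gg p θ := by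
  have h_int : ∀ t₁ t₂ : ℝ, IntervalIntegrable (gg p) volume t₁ t₂ :=
    fun t₁ t₂ => gg_cont.intervalIntegrable _ _
  have hsplit : (∫ θ in A..B, gg p θ)
      = (∫ θ in A..(A + (m:ℝ) * Real.pi), gg p θ) + ∫ θ in (A + (m:ℝ) * Real.pi)..B, gg p θ :=
    (intervalIntegral.integral_add_adjacent_intervals (h_int _ _) (h_int _ _)).symm
  have h1 : (∫ θ in A..(A + (m:ℝ) * Real.pi), gg p θ)
      = (m : ℝ) * ∫ θ in (0:ℝ)..Real.pi, gg p θ := by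
    have := Function.Periodic.intervalIntegral_add_zsmul_eq (gg_periodic (p := p)) (m : ℤ) A h_int
    rw [show ((m : ℤ) • Real.pi) = (m:ℝ) * Real.pi by push_cast [zsmul_eq_mul]; ring] at this
    rw [this, gg_periodic.intervalIntegral_add_eq A 0, zero_add, zsmul_eq_mul]
    push_cast; ring
  have h2 : 0 ≤ ∫ θ in (A + (m:ℝ) * Real.pi)..B, gg p θ :=
    intervalIntegral.integral_nonneg hAB (fun x _ => gg_nonneg x)
  rw [hsplit, h1]; linarith

lemma c_sq : Real.sqrt (2 - p ^ 2) ^ 2 = 2 - p ^ 2 :=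
  Real.sq_sqrt (by nlinarith)

lemma c_gt_one : 1 < Real.sqrt (2 - p ^ 2) := by
  rw [show (1:ℝ) = Real.sqrt 1 by simp]
  exact Real.sqrt_lt_sqrt (by norm_num) (by nlinarith)

lemma pointwise_bound (ε : ℝ) (hε : ε = 1 ∨ ε = -1) (x : ℝ) :
    ε * Real.cos x + (1 - p ^ 2) * Real.sin x ≤ Real.sqrt (2 - p ^ 2) * gg p x := by
  set c := Real.sqrt (2 - p ^ 2) with hc
  have hc0 : 0 ≤ c := Real.sqrt_nonneg _
  have hg0 : 0 ≤ gg p x := gg_nonneg x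
  have hcg : 0 ≤ c * gg p x := mul_nonneg hc0 hg0
  have hsq : (c * gg p x) ^ 2 - (ε * Real.cos x + (1 - p ^ 2) * Real.sin x) ^ 2
      = (1 - p ^ 2) * (Real.sin x - ε * Real.cos x) ^ 2 := by
    have hε2 : ε ^ 2 = 1 := by rcases hε with h | h <;> rw [h] <;> norm_num
    have h1 : (c * gg p x) ^ 2 = (2 - p ^ 2) * (1 - p ^ 2 * Real.sin x ^ 2) := by
      rw [mul_pow, c_sq hp0 hp1, gg_sq hp0 hp1]
    rw [h1]
    have hpyth := Real.sin_sq_add_cos_sq x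
    linear_combination (-(2 - p^2)) * hpyth - (2 - p^2) * Real.cos x ^ 2 * hε2
  have hq2 : (0:ℝ) ≤ (1 - p ^ 2) * (Real.sin x - ε * Real.cos x) ^ 2 :=
    mul_nonneg (by nlinarith) (sq_nonneg _)
  nlinarith [hsq, hcg, hq2]

lemma half_bound_1 :
    2 - p ^ 2 < ∫ x in (0:ℝ)..(Real.pi/2), Real.sqrt (2 - p ^ 2) * gg p x := by
  have hval : (∫ x in (0:ℝ)..(Real.pi/2), (Real.cos x + (1 - p ^ 2) * Real.sin x))
      = 2 - p ^ 2 := by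
    rw [intervalIntegral.integral_add (Real.continuous_cos.intervalIntegrable _ _)
      ((by fun_prop : Continuous (fun x => (1 - p^2) * Real.sin x)).intervalIntegrable _ _)]
    rw [intervalIntegral.integral_const_mul, integral_cos, integral_sin]
    simp [Real.sin_pi_div_two, Real.cos_pi_div_two]
    ring
  have hlt : (∫ x in (0:ℝ)..(Real.pi/2), (Real.cos x + (1 - p ^ 2) * Real.sin x))
      < ∫ x in (0:ℝ)..(Real.pi/2), Real.sqrt (2 - p ^ 2) * gg p x := by
    apply intervalIntegral.integral_lt_integral_of_continuousOn_of_le_of_exists_lt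
      (by positivity)
      (by fun_prop)
      (Continuous.continuousOn (by exact continuous_const.mul gg_cont))
    · intro x _
      have := pointwise_bound hp0 hp1 1 (Or.inl rfl) x
      linarith
    · refine ⟨0, ⟨le_refl _, by positivity⟩, ?_⟩
      have hg1 : gg p 0 = 1 := by simp [gg]
      rw [hg1]
      simpa using c_gt_one hp0 hp1
  rwa [hval] at hlt

lemma half_bound_2 :
    2 - p ^ 2 < ∫ x in (Real.pi/2)..Real.pi, Real.sqrt (2 - p ^ 2) * gg p x := by
  have hval : (∫ x in (Real.pi/2)..Real.pi, (-Real.cos x + (1 - p ^ 2) * Real.sin x))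
      = 2 - p ^ 2 := by
    rw [intervalIntegral.integral_add ((by fun_prop : Continuous (fun x => -Real.cos x)).intervalIntegrable _ _)
      ((by fun_prop : Continuous (fun x => (1 - p^2) * Real.sin x)).intervalIntegrable _ _)]
    rw [intervalIntegral.integral_const_mul, intervalIntegral.integral_neg, integral_cos, integral_sin]
    simp [Real.sin_pi_div_two, Real.cos_pi_div_two, Real.sin_pi, Real.cos_pi]
    ring
  have hlt : (∫ x in (Real.pi/2)..Real.pi, (-Real.cos x + (1 - p ^ 2) * Real.sin x))
      < ∫ x in (Real.pi/2)..Real.pi, Real.sqrt (2 - p ^ 2) * gg p x := by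
    apply intervalIntegral.integral_lt_integral_of_continuousOn_of_le_of_exists_lt
      (by linarith [Real.pi_pos])
      (by fun_prop)
      (Continuous.continuousOn (by exact continuous_const.mul gg_cont))
    · intro x _
      have := pointwise_bound hp0 hp1 (-1) (Or.inr rfl) x
      linarith [this]
    · refine ⟨Real.pi, ⟨by linarith [Real.pi_pos], le_refl _⟩, ?_⟩
      have hg1 : gg p Real.pi = 1 := by simp [gg]
      rw [hg1, Real.cos_pi, Real.sin_pi]
      have := c_gt_one hp0 hp1
      simp only [mul_one]
      linarith
  rwa [hval] at hlt

lemma int_gg_pi_gt :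
    2 * Real.sqrt (2 - p ^ 2) < ∫ θ in (0:ℝ)..Real.pi, gg p θ := by
  set c := Real.sqrt (2 - p ^ 2) with hc
  have hcpos : 0 < c := lt_trans one_pos (c_gt_one hp0 hp1)
  have hci : Continuous (fun x => c * gg p x) := continuous_const.mul gg_cont
  have hsplit : (∫ x in (0:ℝ)..Real.pi, c * gg p x)
      = (∫ x in (0:ℝ)..(Real.pi/2), c * gg p x) + ∫ x in (Real.pi/2)..Real.pi, c * gg p x :=
    (intervalIntegral.integral_add_adjacent_intervals (hci.intervalIntegrable _ _)
      (hci.intervalIntegrable _ _)).symm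
  have h : 2 * (2 - p ^ 2) < ∫ x in (0:ℝ)..Real.pi, c * gg p x := by
    rw [hsplit]
    linarith [half_bound_1 hp0 hp1, half_bound_2 hp0 hp1]
  rw [intervalIntegral.integral_const_mul] at h
  have hc2 : c ^ 2 = 2 - p ^ 2 := c_sq hp0 hp1
  nlinarith [h]
end

/-- For the canonical parametrization of an orbit-like free elastica with
parameter `p ∈ (0,1)`, curvature `κ(s)² = κ₀² dn²(rs,p)`, `κ₀² = 4/(2-p²)`,
`r = 1/√(2-p²)`: if `am(rβ,p) - am(rα,p) > mπ`, then `∫_α^β κ² ds > 8m`. -/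
theorem orbitlike_energy_lower_bound (p α β : ℝ) (hp : p ∈ Set.Ioo (0:ℝ) 1)
    (m : ℕ) (hm : 0 < m)
    (h : am p (β / Real.sqrt (2 - p ^ 2)) - am p (α / Real.sqrt (2 - p ^ 2))
          > (m : ℝ) * Real.pi) :
    (∫ s in α..β, (4 / (2 - p ^ 2)) * dn p (s / Real.sqrt (2 - p ^ 2)) ^ 2)
      > 8 * (m : ℝ) := by
  obtain ⟨hp0, hp1⟩ := hp
  set c := Real.sqrt (2 - p ^ 2) with hc
  have hcpos : 0 < c := lt_trans one_pos (c_gt_one hp0 hp1)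
  have hc2 : c ^ 2 = 2 - p ^ 2 := c_sq hp0 hp1
  have hmpos : (0:ℝ) < m := by exact_mod_cast hm
  have h1 : (∫ s in α..β, (4 / (2 - p ^ 2)) * dn p (s / c) ^ 2)
      = (4 / (2 - p ^ 2)) * ∫ s in α..β, dn p (s / c) ^ 2 :=
    intervalIntegral.integral_const_mul _ _
  have h2 : (∫ s in α..β, dn p (s / c) ^ 2) = c * ∫ u in (α/c)..(β/c), dn p u ^ 2 := by
    rw [intervalIntegral.integral_comp_div (fun u => dn p u ^ 2) hcpos.ne', smul_eq_mul]
  have h3 : (∫ u in (α/c)..(β/c), dn p u ^ 2)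
      = ∫ θ in (am p (α/c))..(am p (β/c)), gg p θ := dn_int hp0 hp1 _ _
  have hAB : am p (α/c) + (m:ℝ) * Real.pi ≤ am p (β/c) := by linarith
  have h4 : (m:ℝ) * ∫ θ in (0:ℝ)..Real.pi, gg p θ
      ≤ ∫ θ in (am p (α/c))..(am p (β/c)), gg p θ := int_gg_ge _ _ m hAB
  have h5 : 2 * c < ∫ θ in (0:ℝ)..Real.pi, gg p θ := int_gg_pi_gt hp0 hp1
  have h6 : 2 * c * (m:ℝ) < ∫ θ in (am p (α/c))..(am p (β/c)), gg p θ := by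
    nlinarith
  rw [h1, h2, h3]
  rw [show (2 - p ^ 2) = c ^ 2 from hc2.symm]
  rw [gt_iff_lt, div_mul_eq_mul_div, lt_div_iff₀ (by positivity)]
  nlinarith
end

section
/- Let λ_n ↘ 0 and p_n ∈ (1/√2, 1) with p_n ↗ 1 be parameters of λ_n-figure-eights, i.e., solutions of the closing condition ∫₀^{π/2} [sin²θ − λ_n/κ₀²] / [(1 − (4κ₀²/(κ₀²−λ_n)²)·cos²θ)·sqrt(1 − p_n² cos²θ)] dθ = 0 with κ₀² = (2λ_n + 4)p_n²/(2p_n² − 1). Then (1 − p_n²)/λ_n² → ∞ as n → ∞. -/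
open Filter Real MeasureTheory intervalIntegral Set

set_option maxHeartbeats 2000000 in
lemma fig8_core (M l q mu c : ℝ) (hM : 1 ≤ M)
    (hl : 0 < l) (hl1 : l ≤ 1)
    (hq0 : 1/2 ≤ q)
    (hq2 : 1/2 ≤ q^2) (hq3 : q^2 ≤ 1)
    (hs : 1 - q^2 ≤ M * l^2) (hspos : 0 < 1 - q^2)
    (hmu0 : 0 ≤ mu)
    (hmu1 : l^2/50 ≤ 1 - mu)
    (hmu2 : 1 - mu ≤ (M+1) * l^2)
    (hc : l/12 ≤ c)
    (hb1 : Real.sqrt (M+1) * l ≤ 1) :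
    (∫ θ in (0:ℝ)..(π/2),
      (Real.sin θ ^ 2 - c) / ((1 - mu * Real.cos θ ^ 2) * Real.sqrt (1 - q^2 * Real.cos θ ^ 2)))
      ≤ 100*(M+1) + 4 + 8/Real.sqrt l - 1/(12*(M+2)^2*l) := by
  have hl2 : (0:ℝ) < l^2 := by positivity
  have hmu_lt : mu < 1 := by nlinarith
  have hApos : ∀ θ : ℝ, 0 < 1 - mu * Real.cos θ ^ 2 := by
    intro θ
    nlinarith [Real.cos_sq_le_one θ, sq_nonneg (Real.cos θ)]
  have hAlb : ∀ θ : ℝ, l^2/50 ≤ 1 - mu * Real.cos θ ^ 2 := by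
    intro θ
    nlinarith [Real.cos_sq_le_one θ, sq_nonneg (Real.cos θ)]
  have hBpos : ∀ θ : ℝ, 0 < 1 - q^2 * Real.cos θ ^ 2 := by
    intro θ
    nlinarith [Real.cos_sq_le_one θ, sq_nonneg (Real.cos θ), sq_nonneg q]
  have hBspos : ∀ θ : ℝ, 0 < Real.sqrt (1 - q^2 * Real.cos θ ^ 2) :=
    fun θ => Real.sqrt_pos.mpr (hBpos θ)
  have hDpos : ∀ θ : ℝ,
      0 < (1 - mu * Real.cos θ ^ 2) * Real.sqrt (1 - q^2 * Real.cos θ ^ 2) :=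
    fun θ => mul_pos (hApos θ) (hBspos θ)
  -- continuity and integrability
  have hcD : Continuous fun θ : ℝ =>
      (1 - mu * Real.cos θ ^ 2) * Real.sqrt (1 - q^2 * Real.cos θ ^ 2) := by
    apply Continuous.mul
    · exact continuous_const.sub (continuous_const.mul (Real.continuous_cos.pow 2))
    · exact Real.continuous_sqrt.comp
        (continuous_const.sub (continuous_const.mul (Real.continuous_cos.pow 2)))
  have hcg : Continuous fun θ : ℝ =>
      1/((1 - mu * Real.cos θ ^ 2) * Real.sqrt (1 - q^2 * Real.cos θ ^ 2)) :=
    continuous_const.div hcD fun θ => (hDpos θ).ne'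
  have hcf1 : Continuous fun θ : ℝ =>
      Real.sin θ ^ 2/((1 - mu * Real.cos θ ^ 2) * Real.sqrt (1 - q^2 * Real.cos θ ^ 2)) :=
    (Real.continuous_sin.pow 2).div hcD fun θ => (hDpos θ).ne'
  have hcf0 : Continuous fun θ : ℝ =>
      (Real.sin θ ^ 2 - c)/((1 - mu * Real.cos θ ^ 2) * Real.sqrt (1 - q^2 * Real.cos θ ^ 2)) :=
    ((Real.continuous_sin.pow 2).sub continuous_const).div hcD fun θ => (hDpos θ).ne'
  -- step 1 : separate the two parts
  have hstep1 : (∫ θ in (0:ℝ)..(π/2),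
        (Real.sin θ ^ 2 - c) / ((1 - mu * Real.cos θ ^ 2) * Real.sqrt (1 - q^2 * Real.cos θ ^ 2)))
      = (∫ θ in (0:ℝ)..(π/2),
          Real.sin θ ^ 2 / ((1 - mu * Real.cos θ ^ 2) * Real.sqrt (1 - q^2 * Real.cos θ ^ 2)))
        - c * ∫ θ in (0:ℝ)..(π/2),
            1 / ((1 - mu * Real.cos θ ^ 2) * Real.sqrt (1 - q^2 * Real.cos θ ^ 2)) := by
    rw [← intervalIntegral.integral_const_mul,
      ← intervalIntegral.integral_sub (hcf1.intervalIntegrable _ _)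
        ((hcg.intervalIntegrable _ _).const_mul c)]
    apply intervalIntegral.integral_congr
    intro θ _
    simp only [sub_div, mul_one_div]
  -- the scale b
  have hM1 : (0:ℝ) < M+1 := by linarith
  have hsq1 : (1:ℝ) ≤ Real.sqrt (M+1) := Real.le_sqrt_of_sq_le (by nlinarith)
  have hbpos : 0 < Real.sqrt (M+1) * l := mul_pos (by linarith) hl
  have hbl : l ≤ Real.sqrt (M+1) * l := by nlinarith
  have hb2 : Real.sqrt (M+1) * l ≤ π/2 := hb1.trans (by linarith [pi_gt_three])
  have hbsq : (Real.sqrt (M+1) * l)^2 = (M+1)*l^2 := by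
    rw [mul_pow, Real.sq_sqrt hM1.le]
  have hπ2 : l ≤ π/2 := hl1.trans (by linarith [pi_gt_three])
  -- lower bound on the sqrt factor
  have hBlow : ∀ θ : ℝ, 0 ≤ θ → θ ≤ π/2 → θ/4 ≤ Real.sqrt (1 - q^2 * Real.cos θ ^ 2) := by
    intro θ hθ0 hθπ
    apply Real.le_sqrt_of_sq_le
    have h2pi : θ/2 ≤ 2/π*θ := by
      have h24 : (2:ℝ)/4 ≤ 2/π := div_le_div_of_nonneg_left (by norm_num) pi_pos pi_le_four
      nlinarith
    have hsin_lb : θ/2 ≤ Real.sin θ := h2pi.trans (Real.mul_le_sin hθ0 hθπ)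
    have hsin2 : θ^2/4 ≤ Real.sin θ^2 := by nlinarith
    have hmul : q^2 * (θ^2/4) ≤ q^2 * Real.sin θ^2 :=
      mul_le_mul_of_nonneg_left hsin2 (by positivity)
    nlinarith [Real.sin_sq_add_cos_sq θ, mul_nonneg (sub_nonneg.mpr hq2) (sq_nonneg θ)]
  -- bound on the positive part
  have hP : (∫ θ in (0:ℝ)..(π/2),
        Real.sin θ ^ 2 / ((1 - mu * Real.cos θ ^ 2) * Real.sqrt (1 - q^2 * Real.cos θ ^ 2)))
      ≤ 100*(M+1) + (4 + 8/Real.sqrt l) := by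
    have hsplit : (∫ θ in (0:ℝ)..(π/2),
          Real.sin θ ^ 2 / ((1 - mu * Real.cos θ ^ 2) * Real.sqrt (1 - q^2 * Real.cos θ ^ 2)))
        = (∫ θ in (0:ℝ)..(Real.sqrt (M+1) * l),
            Real.sin θ ^ 2 / ((1 - mu * Real.cos θ ^ 2) * Real.sqrt (1 - q^2 * Real.cos θ ^ 2)))
          + ∫ θ in (Real.sqrt (M+1) * l)..(π/2),
              Real.sin θ ^ 2 / ((1 - mu * Real.cos θ ^ 2) * Real.sqrt (1 - q^2 * Real.cos θ ^ 2)) :=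
      (intervalIntegral.integral_add_adjacent_intervals (hcf1.intervalIntegrable _ _)
        (hcf1.intervalIntegrable _ _)).symm
    have hP1 : (∫ θ in (0:ℝ)..(Real.sqrt (M+1) * l),
          Real.sin θ ^ 2 / ((1 - mu * Real.cos θ ^ 2) * Real.sqrt (1 - q^2 * Real.cos θ ^ 2)))
        ≤ 100*(M+1) := by
      have hmono : (∫ θ in (0:ℝ)..(Real.sqrt (M+1) * l),
            Real.sin θ ^ 2 / ((1 - mu * Real.cos θ ^ 2) * Real.sqrt (1 - q^2 * Real.cos θ ^ 2)))
          ≤ ∫ θ in (0:ℝ)..(Real.sqrt (M+1) * l), 200/l^2*θ := by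
        apply intervalIntegral.integral_mono_on hbpos.le (hcf1.intervalIntegrable _ _)
          ((continuous_const.mul continuous_id).intervalIntegrable _ _)
        intro θ hθ
        rcases eq_or_lt_of_le hθ.1 with h0 | h0
        · rw [← h0]; simp
        · have hθπ : θ ≤ π/2 := hθ.2.trans hb2
          have hθ0 : 0 ≤ θ := hθ.1
          have hsin_ub : Real.sin θ ≤ θ := Real.sin_le hθ0
          have hsin_nn : 0 ≤ Real.sin θ :=
            Real.sin_nonneg_of_nonneg_of_le_pi hθ0 (by linarith [pi_gt_three])
          rw [div_le_iff₀ (hDpos θ)]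
          calc Real.sin θ^2 ≤ θ^2 := by nlinarith
          _ = 200/l^2*θ * (l^2/50 * (θ/4)) := by field_simp; ring
          _ ≤ 200/l^2*θ * ((1 - mu * Real.cos θ ^ 2) * Real.sqrt (1 - q^2 * Real.cos θ ^ 2)) := by
              apply mul_le_mul_of_nonneg_left _ (by positivity)
              exact mul_le_mul (hAlb θ) (hBlow θ hθ0 hθπ) (by positivity) (hApos θ).le
      calc (∫ θ in (0:ℝ)..(Real.sqrt (M+1) * l),
            Real.sin θ ^ 2 / ((1 - mu * Real.cos θ ^ 2) * Real.sqrt (1 - q^2 * Real.cos θ ^ 2)))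
          ≤ ∫ θ in (0:ℝ)..(Real.sqrt (M+1) * l), 200/l^2*θ := hmono
      _ = 200/l^2 * (((Real.sqrt (M+1) * l)^2 - 0^2)/2) := by
          rw [intervalIntegral.integral_const_mul, integral_id]
      _ = 100*(M+1) := by rw [hbsq]; field_simp; ring
    have hP2 : (∫ θ in (Real.sqrt (M+1) * l)..(π/2),
          Real.sin θ ^ 2 / ((1 - mu * Real.cos θ ^ 2) * Real.sqrt (1 - q^2 * Real.cos θ ^ 2)))
        ≤ 4 + 8/Real.sqrt l := by
      have huIcc : Set.uIcc (Real.sqrt (M+1) * l) (π/2) = Icc (Real.sqrt (M+1) * l) (π/2) :=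
        uIcc_of_le hb2
      have hint4 : IntervalIntegrable (fun θ => 4*(1/θ)) volume (Real.sqrt (M+1) * l) (π/2) := by
        apply ContinuousOn.intervalIntegrable
        apply ContinuousOn.mul continuousOn_const
        apply ContinuousOn.div continuousOn_const continuousOn_id
        intro x hx
        rw [huIcc] at hx
        exact ne_of_gt (lt_of_lt_of_le hbpos hx.1)
      have hmono : (∫ θ in (Real.sqrt (M+1) * l)..(π/2),
            Real.sin θ ^ 2 / ((1 - mu * Real.cos θ ^ 2) * Real.sqrt (1 - q^2 * Real.cos θ ^ 2)))
          ≤ ∫ θ in (Real.sqrt (M+1) * l)..(π/2), 4*(1/θ) := by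
        apply intervalIntegral.integral_mono_on hb2 (hcf1.intervalIntegrable _ _) hint4
        intro θ hθ
        have hθpos : 0 < θ := lt_of_lt_of_le hbpos hθ.1
        have hθπ : θ ≤ π/2 := hθ.2
        have hA_sin : Real.sin θ^2 ≤ 1 - mu * Real.cos θ ^ 2 := by
          nlinarith [Real.sin_sq_add_cos_sq θ,
            mul_nonneg (show (0:ℝ) ≤ 1 - mu by linarith) (sq_nonneg (Real.cos θ))]
        rw [div_le_iff₀ (hDpos θ)]
        calc Real.sin θ^2 = 4*(1/θ)*(Real.sin θ^2 * (θ/4)) := by field_simp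
        _ ≤ 4*(1/θ)*((1 - mu * Real.cos θ ^ 2) * Real.sqrt (1 - q^2 * Real.cos θ ^ 2)) := by
            apply mul_le_mul_of_nonneg_left _ (by positivity)
            exact mul_le_mul hA_sin (hBlow θ hθpos.le hθπ) (by positivity) (hApos θ).le
      have hlogb : (∫ θ in (Real.sqrt (M+1) * l)..(π/2), 4*(1/θ))
          = 4 * Real.log ((π/2)/(Real.sqrt (M+1) * l)) := by
        rw [intervalIntegral.integral_const_mul,
          integral_one_div (notMem_uIcc_of_lt hbpos pi_div_two_pos)]
      have hlog1 : Real.log ((π/2)/(Real.sqrt (M+1) * l))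
          = Real.log (π/2) - Real.log (Real.sqrt (M+1) * l) :=
        Real.log_div (ne_of_gt pi_div_two_pos) hbpos.ne'
      have h2 : Real.log (π/2) ≤ 1 := by
        linarith [Real.log_le_sub_one_of_pos pi_div_two_pos, pi_le_four]
      have h3 : Real.log l ≤ Real.log (Real.sqrt (M+1) * l) := Real.log_le_log hl hbl
      have hsl : 0 < Real.sqrt l := Real.sqrt_pos.mpr hl
      have h4 : -Real.log l ≤ 2/Real.sqrt l := by
        have h5 : Real.log ((Real.sqrt l)⁻¹) ≤ (Real.sqrt l)⁻¹ - 1 :=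
          Real.log_le_sub_one_of_pos (inv_pos.mpr hsl)
        rw [Real.log_inv] at h5
        have h6 : Real.log l = 2 * Real.log (Real.sqrt l) := by
          conv_lhs => rw [← Real.sq_sqrt hl.le]
          rw [Real.log_pow]; norm_num
        rw [div_eq_mul_inv]
        linarith
      have h7 : Real.log ((π/2)/(Real.sqrt (M+1) * l)) ≤ 1 + 2/Real.sqrt l := by
        rw [hlog1]; linarith
      calc (∫ θ in (Real.sqrt (M+1) * l)..(π/2),
            Real.sin θ ^ 2 / ((1 - mu * Real.cos θ ^ 2) * Real.sqrt (1 - q^2 * Real.cos θ ^ 2)))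
          ≤ ∫ θ in (Real.sqrt (M+1) * l)..(π/2), 4*(1/θ) := hmono
      _ = 4 * Real.log ((π/2)/(Real.sqrt (M+1) * l)) := hlogb
      _ ≤ 4 + 8/Real.sqrt l := by
          have h8 : 8/Real.sqrt l = 4*(2/Real.sqrt l) := by ring
          linarith
    rw [hsplit]; linarith
  -- lower bound on the weight integral
  have hI : 1/((M+2)^2*l^2) ≤ ∫ θ in (0:ℝ)..(π/2),
      1 / ((1 - mu * Real.cos θ ^ 2) * Real.sqrt (1 - q^2 * Real.cos θ ^ 2)) := by
    have hsplit2 : (∫ θ in (0:ℝ)..(π/2),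
          1 / ((1 - mu * Real.cos θ ^ 2) * Real.sqrt (1 - q^2 * Real.cos θ ^ 2)))
        = (∫ θ in (0:ℝ)..l,
            1 / ((1 - mu * Real.cos θ ^ 2) * Real.sqrt (1 - q^2 * Real.cos θ ^ 2)))
          + ∫ θ in l..(π/2),
              1 / ((1 - mu * Real.cos θ ^ 2) * Real.sqrt (1 - q^2 * Real.cos θ ^ 2)) :=
      (intervalIntegral.integral_add_adjacent_intervals (hcg.intervalIntegrable _ _)
        (hcg.intervalIntegrable _ _)).symm
    have h2nd : 0 ≤ ∫ θ in l..(π/2),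
        1 / ((1 - mu * Real.cos θ ^ 2) * Real.sqrt (1 - q^2 * Real.cos θ ^ 2)) :=
      intervalIntegral.integral_nonneg hπ2 (fun θ _ => (one_div_pos.mpr (hDpos θ)).le)
    have h1st : 1/((M+2)^2*l^2) ≤ ∫ θ in (0:ℝ)..l,
        1 / ((1 - mu * Real.cos θ ^ 2) * Real.sqrt (1 - q^2 * Real.cos θ ^ 2)) := by
      have hmono : (∫ _θ in (0:ℝ)..l, 1/((M+2)^2*l^3))
          ≤ ∫ θ in (0:ℝ)..l,
              1 / ((1 - mu * Real.cos θ ^ 2) * Real.sqrt (1 - q^2 * Real.cos θ ^ 2)) := by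
        apply intervalIntegral.integral_mono_on hl.le intervalIntegrable_const
          (hcg.intervalIntegrable _ _)
        intro θ hθ
        have hθ0 : 0 ≤ θ := hθ.1
        have hθl : θ ≤ l := hθ.2
        have hsub : Real.sin θ ≤ θ := Real.sin_le hθ0
        have hsnn : 0 ≤ Real.sin θ :=
          Real.sin_nonneg_of_nonneg_of_le_pi hθ0 (by linarith [pi_gt_three])
        have hsq : Real.sin θ^2 ≤ l^2 := by nlinarith
        have hAub : 1 - mu * Real.cos θ ^ 2 ≤ (M+2)*l^2 := by
          nlinarith [Real.sin_sq_add_cos_sq θ,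
            mul_nonneg (show (0:ℝ) ≤ 1 - mu by linarith) (sq_nonneg (Real.sin θ))]
        have hBub : Real.sqrt (1 - q^2 * Real.cos θ ^ 2) ≤ (M+2)*l := by
          rw [show (M+2)*l = Real.sqrt (((M+2)*l)^2) from (Real.sqrt_sq (by positivity)).symm]
          apply Real.sqrt_le_sqrt
          nlinarith [Real.sin_sq_add_cos_sq θ,
            mul_nonneg hspos.le (sq_nonneg (Real.sin θ)), sq_nonneg l]
        have hDub : (1 - mu * Real.cos θ ^ 2) * Real.sqrt (1 - q^2 * Real.cos θ ^ 2)
            ≤ (M+2)^2*l^3 := by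
          calc (1 - mu * Real.cos θ ^ 2) * Real.sqrt (1 - q^2 * Real.cos θ ^ 2)
              ≤ ((M+2)*l^2) * ((M+2)*l) :=
                mul_le_mul hAub hBub (Real.sqrt_nonneg _) (by positivity)
          _ = (M+2)^2*l^3 := by ring
        exact one_div_le_one_div_of_le (hDpos θ) hDub
      calc 1/((M+2)^2*l^2) = (l - 0) • (1/((M+2)^2*l^3)) := by
            rw [smul_eq_mul]; field_simp; ring
      _ = ∫ _θ in (0:ℝ)..l, 1/((M+2)^2*l^3) := (intervalIntegral.integral_const _).symm
      _ ≤ _ := hmono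
    rw [hsplit2]; linarith
  have hc0 : 0 ≤ c := le_trans (by positivity) hc
  have hcI : 1/(12*(M+2)^2*l) ≤ c * ∫ θ in (0:ℝ)..(π/2),
      1 / ((1 - mu * Real.cos θ ^ 2) * Real.sqrt (1 - q^2 * Real.cos θ ^ 2)) := by
    calc 1/(12*(M+2)^2*l) = (l/12) * (1/((M+2)^2*l^2)) := by field_simp
    _ ≤ c * ∫ θ in (0:ℝ)..(π/2),
        1 / ((1 - mu * Real.cos θ ^ 2) * Real.sqrt (1 - q^2 * Real.cos θ ^ 2)) :=
      mul_le_mul hc hI (by positivity) hc0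
  rw [hstep1]
  linarith

lemma fig8_rhs_neg (M l : ℝ) (hM : 1 ≤ M) (hl : 0 < l) (hl1 : l ≤ 1)
    (hld : l < (1/(12*(M+2)^2*(100*(M+1)+12)))^2) :
    100*(M+1) + 4 + 8/Real.sqrt l - 1/(12*(M+2)^2*l) < 0 := by
  set u := Real.sqrt l with hu
  have hu0 : 0 < u := Real.sqrt_pos.mpr hl
  have hul : u^2 = l := Real.sq_sqrt hl.le
  have hu1 : u ≤ 1 := by
    nlinarith [hul]
  have hP : (0:ℝ) < 12*(M+2)^2 := by positivity
  have hA : (0:ℝ) < 100*(M+1)+12 := by positivity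
  have huu : u < 1/(12*(M+2)^2*(100*(M+1)+12)) := by
    have h := Real.sqrt_lt_sqrt hl.le hld
    rwa [Real.sqrt_sq (by positivity), ← hu] at h
  have h3 : u*(12*(M+2)^2*(100*(M+1)+12)) < 1 := by
    rw [lt_div_iff₀ (by positivity)] at huu
    linarith
  have key : (100*(M+1) + 4 + 8/u) * (12*(M+2)^2*l) < 1 := by
    have expand : (100*(M+1) + 4 + 8/u) * (12*(M+2)^2*l) =
        (100*(M+1)+4)*(12*(M+2)^2)*u^2 + 8*(12*(M+2)^2)*u := by
      rw [← hul]; field_simp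
    rw [expand]
    nlinarith [mul_nonneg (mul_nonneg (by positivity : (0:ℝ) ≤ (100*(M+1)+4)*(12*(M+2)^2)) hu0.le) (sub_nonneg.mpr hu1)]
  have hfin : 100*(M+1) + 4 + 8/u < 1/(12*(M+2)^2*l) := by
    rw [lt_div_iff₀ (by positivity)]
    exact key
  linarith

set_option maxHeartbeats 2000000 in
lemma fig8_neg_aux (M l q K : ℝ) (hM : 1 ≤ M) (hl : 0 < l)
    (hld1 : l < 1/(4*(M+1))) (hld2 : l < (1/(12*(M+2)^2*(100*(M+1)+12)))^2)
    (hq : 1 / Real.sqrt 2 < q) (hq1 : q < 1) (hs : 1 - q^2 ≤ M * l^2)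
    (hK : K = (2 * l + 4) * q ^ 2 / (2 * q ^ 2 - 1)) :
    (∫ θ in (0:ℝ)..(Real.pi / 2),
        (Real.sin θ ^ 2 - l / K) /
          ((1 - (4 * K / (K - l) ^ 2) * Real.cos θ ^ 2) *
            Real.sqrt (1 - q ^ 2 * Real.cos θ ^ 2))) < 0 := by
  have hl1 : l ≤ 1 := by
    have h : 1/(4*(M+1)) ≤ 1 := by rw [div_le_one (by positivity)]; linarith
    linarith
  -- basic facts about q
  have hs2 : Real.sqrt 2 ≤ 2 := by
    nlinarith [Real.sq_sqrt (by norm_num : (0:ℝ) ≤ 2), Real.sqrt_nonneg 2]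
  have hs2' : (0:ℝ) < Real.sqrt 2 := Real.sqrt_pos.mpr (by norm_num)
  have hq0 : 1/2 ≤ q := le_trans (by rw [div_le_div_iff₀ (by norm_num) hs2']; linarith) hq.le
  have hqpos : 0 < q := lt_of_lt_of_le (by norm_num) hq0
  have hq2' : 1/2 < q^2 := by
    have h : (1/Real.sqrt 2)^2 = 1/2 := by
      rw [div_pow, one_pow, Real.sq_sqrt (by norm_num : (0:ℝ) ≤ 2)]
    calc 1/2 = (1/Real.sqrt 2)^2 := h.symm
    _ < q^2 := by
      apply pow_lt_pow_left₀ hq (by positivity) (by norm_num)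
  have hq3 : q^2 ≤ 1 := by nlinarith
  have hspos : 0 < 1 - q^2 := by nlinarith
  -- smallness of M l²
  have hMl2 : M*l^2 ≤ 1/16 := by
    have ht : l*(4*(M+1)) < 1 := by
      rw [lt_div_iff₀ (by positivity)] at hld1; linarith
    nlinarith [mul_pos hl (by positivity : (0:ℝ) < 4*(M+1))]
  have hq34 : 3/4 ≤ q^2 := by nlinarith
  have h2q : (0:ℝ) < 2*q^2 - 1 := by nlinarith
  have h2q' : 1/2 ≤ 2*q^2 - 1 := by nlinarith
  have hKub : K ≤ 12 := by
    rw [hK, div_le_iff₀ h2q]; nlinarith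
  have hKlb : 3 ≤ K := by
    rw [hK, le_div_iff₀ h2q]; nlinarith
  have hKl2 : 2 ≤ K - l := by linarith
  have hmu0 : 0 ≤ 4 * K / (K - l) ^ 2 := by positivity
  have hKml : K - l = (l + 4*q^2)/(2*q^2 - 1) := by
    rw [hK]; field_simp; ring
  have hYpos : (0:ℝ) < l + 4*q^2 := by nlinarith
  have h1mu : 1 - 4 * K / (K - l) ^ 2 = (1 - q^2) + q^2 * (l + 4 - 4*q^2)^2/(l + 4*q^2)^2 := by
    rw [hKml, hK]; field_simp; ring
  have hmu1 : l^2/50 ≤ 1 - 4 * K / (K - l) ^ 2 := by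
    rw [h1mu]
    have hY1 : (l + 4*q^2)^2 ≤ 25 := by nlinarith
    have hX1 : l^2 ≤ (l + 4 - 4*q^2)^2 := by nlinarith
    have hkey : l^2/50 ≤ q^2 * (l + 4 - 4*q^2)^2/(l + 4*q^2)^2 := by
      rw [div_le_div_iff₀ (by norm_num) (by positivity)]
      nlinarith [sq_nonneg l, mul_le_mul_of_nonneg_left hY1 (sq_nonneg l),
        mul_le_mul_of_nonneg_left hX1 (by positivity : (0:ℝ) ≤ q^2), hq2']
    linarith
  have hmu2 : 1 - 4 * K / (K - l) ^ 2 ≤ (M+1) * l^2 := by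
    rw [h1mu]
    have hMl : 4*M*l ≤ 1 := by
      have ht : l*(4*(M+1)) < 1 := by
        rw [lt_div_iff₀ (by positivity)] at hld1; linarith
      nlinarith
    have hx : l + 4 - 4*q^2 ≤ 2*l := by nlinarith
    have hx0 : 0 < l + 4 - 4*q^2 := by nlinarith
    have hXub : (l + 4 - 4*q^2)^2 ≤ 4*l^2 := by nlinarith
    have hYlb : 9 ≤ (l + 4*q^2)^2 := by nlinarith
    have hkey : q^2 * (l + 4 - 4*q^2)^2/(l + 4*q^2)^2 ≤ 4*l^2/9 := by
      rw [div_le_div_iff₀ (by positivity) (by norm_num)]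
      nlinarith [sq_nonneg (l + 4 - 4*q^2), sq_nonneg l]
    nlinarith
  have hc : l/12 ≤ l/K := by
    exact div_le_div_of_nonneg_left hl.le (by linarith : (0:ℝ) < K) hKub
  have hb1 : Real.sqrt (M+1) * l ≤ 1 := by
    have h1 : Real.sqrt (M+1) ≤ M+1 := by
      calc Real.sqrt (M+1) ≤ Real.sqrt ((M+1)^2) := Real.sqrt_le_sqrt (by nlinarith)
      _ = M+1 := Real.sqrt_sq (by linarith)
    calc Real.sqrt (M+1) * l ≤ (M+1) * (1/(4*(M+1))) := by
          apply mul_le_mul h1 hld1.le hl.le (by linarith)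
    _ ≤ 1 := by rw [mul_one_div, div_le_one (by positivity)]; linarith
  calc (∫ θ in (0:ℝ)..(Real.pi / 2),
        (Real.sin θ ^ 2 - l / K) /
          ((1 - (4 * K / (K - l) ^ 2) * Real.cos θ ^ 2) *
            Real.sqrt (1 - q ^ 2 * Real.cos θ ^ 2)))
      ≤ 100*(M+1) + 4 + 8/Real.sqrt l - 1/(12*(M+2)^2*l) :=
        fig8_core M l q (4 * K / (K - l) ^ 2) (l/K) hM hl hl1 hq0 hq2'.le hq3 hs hspos hmu0 hmu1 hmu2 hc hb1
  _ < 0 := fig8_rhs_neg M l hM hl hl1 hld2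


lemma fig8_neg (M : ℝ) (hM : 1 ≤ M) : ∃ δ > 0, ∀ l q : ℝ, 0 < l → l < δ →
    1 / Real.sqrt 2 < q → q < 1 → 1 - q^2 ≤ M * l^2 →
    (∫ θ in (0:ℝ)..(Real.pi / 2),
        (Real.sin θ ^ 2 - l / ((2 * l + 4) * q ^ 2 / (2 * q ^ 2 - 1))) /
          ((1 - (4 * ((2 * l + 4) * q ^ 2 / (2 * q ^ 2 - 1)) /
              (((2 * l + 4) * q ^ 2 / (2 * q ^ 2 - 1)) - l) ^ 2) *
                Real.cos θ ^ 2) *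
            Real.sqrt (1 - q ^ 2 * Real.cos θ ^ 2))) < 0 := by
  refine ⟨min (1/(4*(M+1))) ((1/(12*(M+2)^2*(100*(M+1)+12)))^2), by positivity, ?_⟩
  intro l q hl hld hq hq1 hs
  exact fig8_neg_aux M l q _ hM hl (lt_of_lt_of_le hld (min_le_left _ _))
    (lt_of_lt_of_le hld (min_le_right _ _)) hq hq1 hs rfl

/-- If `λₙ ↘ 0` and `pₙ ∈ (1/√2, 1)` with `pₙ ↗ 1` satisfy the closing
condition of `λₙ`-figure-eights, then `(1 - pₙ²)/λₙ² → ∞`. -/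
theorem figure_eight_parameter_asymptotics (lam p : ℕ → ℝ)
    (hlam_pos : ∀ n, 0 < lam n) (hlam_anti : Antitone lam)
    (hlam_lim : Tendsto lam atTop (nhds 0))
    (hp_mem : ∀ n, p n ∈ Set.Ioo (1 / Real.sqrt 2) 1) (hp_mono : Monotone p)
    (hp_lim : Tendsto p atTop (nhds 1))
    (hclose : ∀ n,
      (∫ θ in (0:ℝ)..(Real.pi / 2),
        (Real.sin θ ^ 2 - lam n / ((2 * lam n + 4) * p n ^ 2 / (2 * p n ^ 2 - 1))) /
          ((1 - (4 * ((2 * lam n + 4) * p n ^ 2 / (2 * p n ^ 2 - 1)) /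
              (((2 * lam n + 4) * p n ^ 2 / (2 * p n ^ 2 - 1)) - lam n) ^ 2) *
                Real.cos θ ^ 2) *
            Real.sqrt (1 - p n ^ 2 * Real.cos θ ^ 2))) = 0) :
    Tendsto (fun n => (1 - p n ^ 2) / lam n ^ 2) atTop atTop := by
  rw [tendsto_atTop]
  intro C
  obtain ⟨δ, hδ, H⟩ := fig8_neg (max C 1) (le_max_right _ _)
  filter_upwards [hlam_lim.eventually_lt_const hδ] with n hn
  have hp := hp_mem n
  by_contra hcon
  push_neg at hcon
  have h2 : (1 - p n ^ 2)/lam n ^ 2 ≤ max C 1 := le_trans hcon.le (le_max_left _ _)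
  have hlt : 1 - p n ^ 2 ≤ max C 1 * lam n ^ 2 := by
    have hlsq : (0:ℝ) < lam n ^ 2 := pow_pos (hlam_pos n) 2
    calc 1 - p n ^ 2 = (1 - p n ^ 2)/lam n ^ 2 * lam n ^ 2 := by
          rw [div_mul_cancel₀ _ hlsq.ne']
    _ ≤ max C 1 * lam n ^ 2 := mul_le_mul_of_nonneg_right h2 hlsq.le
  exact absurd (hclose n) (ne_of_lt (H (lam n) (p n) (hlam_pos n) hn hp.1 hp.2 hlt))
end
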